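/- arXiv:2112.03725 — 5 statements merged into one kernel-verified Lean document; each statement's English description precedes it below -/
import Mathlib

section
/- Let D(r,s) be the covariance double contour integral (see context). For all integers r ≥ s ≥ 1 with r ≥ 2 one has (r−1)·D(r−1,s) + (s−1)·D(r,s−1) − (r+s)·D(r,s) = 0, where in the case s = 1 the term (s−1)·D(r,s−1) is interpreted as 0. -/
open MeasureTheory Filter Finset

/-- The covariance double contour integral `D(r,s)` of slowed `t`-TASEP:
`D(r,s) = (1/(4π²)) ∮_{|z|=R} ∮_{|w|=ρ} (w/(z−w)) (r!s!/(z^r w^s)) e^{z+w} (1−z/r)(1−w/s) (dz/z)(dw/w)`,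
with both circles centered at the origin, traversed counterclockwise, and the inner
integral in `w` performed first. -/
noncomputable def covD (r s : ℕ) (R ρ : ℝ) : ℂ :=
  (1 / (4 * (Real.pi : ℂ) ^ 2)) *
    ∮ z in C(0, R),
      (∮ w in C(0, ρ),
        w / (z - w) * ((r.factorial : ℂ) * (s.factorial : ℂ) / (z ^ r * w ^ s)) *
          Complex.exp (z + w) * (1 - z / (r : ℂ)) * (1 - w / (s : ℂ)) / w) / z

/-! ### Auxiliary integration lemmas -/

lemma circleIntegral_add' {f g : ℂ → ℂ} {c : ℂ} {R : ℝ} (hf : CircleIntegrable f c R)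
    (hg : CircleIntegrable g c R) :
    (∮ z in C(c, R), (f z + g z)) = (∮ z in C(c, R), f z) + ∮ z in C(c, R), g z := by
  simp only [circleIntegral, smul_add]
  exact intervalIntegral.integral_add hf.out hg.out

lemma circleIntegral_finset_sum {ι : Type*} (t : Finset ι) (f : ι → ℂ → ℂ) {c : ℂ} {R : ℝ}
    (h : ∀ i ∈ t, CircleIntegrable (f i) c R) :
    (∮ z in C(c, R), ∑ i ∈ t, f i z) = ∑ i ∈ t, ∮ z in C(c, R), f i z := by
  simp only [circleIntegral, Finset.smul_sum]
  rw [intervalIntegral.integral_finset_sum]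
  exact fun i hi => (h i hi).out

lemma ne_zero_of_mem_sphere0 {ρ : ℝ} (hρ : 0 < ρ) {w : ℂ} (hw : w ∈ Metric.sphere (0:ℂ) ρ) :
    w ≠ 0 := by
  intro h
  rw [Metric.mem_sphere, h, dist_self] at hw
  exact hρ.ne hw

lemma contOn_exp_div_pow {ρ : ℝ} (hρ : 0 < ρ) (k : ℕ) :
    ContinuousOn (fun w : ℂ => Complex.exp w / w ^ k) (Metric.sphere (0:ℂ) ρ) := by
  refine ContinuousOn.div Complex.continuous_exp.continuousOn
    (continuous_pow k).continuousOn fun w hw => ?_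
  exact pow_ne_zero k (ne_zero_of_mem_sphere0 hρ hw)

lemma circleIntegral_exp_div_pow_succ (ρ : ℝ) (hρ : 0 < ρ) (n : ℕ) :
    (∮ w in C(0, ρ), Complex.exp w / w ^ (n + 1)) =
      2 * Real.pi * Complex.I / (n.factorial : ℂ) := by
  set ρ' : NNReal := ⟨ρ, hρ.le⟩ with hρ'
  have hball : HasFPowerSeriesOnBall Complex.exp
      (cauchyPowerSeries Complex.exp 0 ρ') 0 ρ' :=
    Complex.differentiable_exp.differentiableOn.hasFPowerSeriesOnBall
      (by exact_mod_cast hρ)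
  have hexp : HasFPowerSeriesAt Complex.exp (NormedSpace.expSeries ℂ ℂ) 0 := by
    rw [Complex.exp_eq_exp_ℂ]
    exact NormedSpace.exp_hasFPowerSeriesAt_zero
  have heq := hball.hasFPowerSeriesAt.eq_formalMultilinearSeries hexp
  have h1 : (cauchyPowerSeries Complex.exp 0 ρ' n fun _ => (1:ℂ)) =
      1 / (n.factorial : ℂ) := by
    rw [heq, NormedSpace.expSeries_apply_eq_div, one_pow]
  rw [cauchyPowerSeries_apply] at h1
  have h2 : (∮ z in C(0, (ρ' : ℝ)), ((1:ℂ) / (z - 0)) ^ n • (z - 0)⁻¹ • Complex.exp z)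
      = ∮ w in C(0, ρ), Complex.exp w / w ^ (n + 1) := by
    have : (ρ' : ℝ) = ρ := rfl
    rw [this]
    refine circleIntegral.integral_congr hρ.le fun w _ => ?_
    simp only [sub_zero, smul_eq_mul, one_div, inv_pow]
    rw [pow_succ]
    field_simp
  rw [h2, smul_eq_mul] at h1
  have hn : (n.factorial : ℂ) ≠ 0 := Nat.cast_ne_zero.mpr (Nat.factorial_ne_zero n)
  have hπ : (2 * (Real.pi : ℂ) * Complex.I) ≠ 0 := by
    simp [Real.pi_ne_zero, Complex.I_ne_zero]
  rw [eq_div_iff hn]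
  rw [inv_mul_eq_iff_eq_mul₀ hπ] at h1
  rw [h1]
  field_simp

lemma circleIntegral_exp_div_pow (ρ : ℝ) (hρ : 0 < ρ) (n : ℕ) :
    (∮ w in C(0, ρ), Complex.exp w / w ^ n) =
      if n = 0 then 0 else 2 * Real.pi * Complex.I / ((n - 1).factorial : ℂ) := by
  cases n with
  | zero =>
    rw [if_pos rfl]
    have : (fun w : ℂ => Complex.exp w / w ^ 0) = fun w => Complex.exp w := by
      funext w; simp
    rw [this]
    refine Complex.circleIntegral_eq_zero_of_differentiable_on_off_countable hρ.le
      Set.countable_empty Complex.continuous_exp.continuousOn fun w _ => ?_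
    exact Complex.differentiable_exp w
  | succ m =>
    rw [if_neg (Nat.succ_ne_zero m)]
    simpa using circleIntegral_exp_div_pow_succ ρ hρ m

lemma circleIntegral_holo_zero (ρ : ℝ) (hρ : 0 < ρ) (z a : ℂ) (hz : ρ < ‖z‖) :
    (∮ w in C(0, ρ), Complex.exp w * (1 - w / a) / (z - w)) = 0 := by
  have hne : ∀ w ∈ Metric.closedBall (0:ℂ) ρ, z - w ≠ 0 := by
    intro w hw h
    rw [sub_eq_zero] at h
    have hwρ : ‖w‖ ≤ ρ := by
      simpa [Complex.dist_eq] using Metric.mem_closedBall.mp hw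
    rw [← h] at hwρ
    linarith
  have hdiff : ∀ w ∈ Metric.closedBall (0:ℂ) ρ,
      DifferentiableAt ℂ (fun w => Complex.exp w * (1 - w / a) / (z - w)) w := by
    intro w hw
    apply DifferentiableAt.div
    · exact (Complex.differentiable_exp w).mul (by fun_prop)
    · fun_prop
    · exact hne w hw
  refine Complex.circleIntegral_eq_zero_of_differentiable_on_off_countable hρ.le
    Set.countable_empty (fun w hw => (hdiff w hw).continuousAt.continuousWithinAt)
    fun w hw => hdiff w (Metric.ball_subset_closedBall hw.1)

/-! ### Partial fraction decomposition -/

lemma frac_decomp (s : ℕ) (z w : ℂ) (hz : z ≠ 0) (hw : w ≠ 0) (hzw : z - w ≠ 0) :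
    1 / (w ^ s * (z - w)) =
      (∑ j ∈ Finset.range s, w ^ j / (z ^ (j + 1) * w ^ s)) + 1 / (z ^ s * (z - w)) := by
  induction s with
  | zero => simp
  | succ n ih =>
    have h1 : (1:ℂ) / (w ^ (n+1) * (z - w)) = (1/w) * (1 / (w^n * (z-w))) := by
      rw [pow_succ]; field_simp
    rw [h1, ih, mul_add, Finset.mul_sum, Finset.sum_range_succ, add_assoc]
    congr 1
    · refine Finset.sum_congr rfl fun j hj => ?_
      rw [div_mul_div_comm, one_mul, pow_succ]
      congr 1
      ring
    · rw [div_mul_div_comm, one_mul]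
      have hred : (w:ℂ)^n/(z^(n+1)*w^(n+1)) = 1/(z^(n+1)*w) := by
        rw [div_eq_div_iff (by
          exact mul_ne_zero (pow_ne_zero _ hz) (pow_ne_zero _ hw))
          (mul_ne_zero (pow_ne_zero _ hz) hw), pow_succ]
        ring
      rw [hred, pow_succ]
      have h2 : z ^ n * z * w ≠ 0 :=
        mul_ne_zero (mul_ne_zero (pow_ne_zero _ hz) hz) hw
      have h3 : z ^ n * z * (z - w) ≠ 0 :=
        mul_ne_zero (mul_ne_zero (pow_ne_zero _ hz) hz) hzw
      rw [div_add_div _ _ h2 h3, div_eq_div_iff (mul_ne_zero hw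
        (mul_ne_zero (pow_ne_zero _ hz) hzw)) (mul_ne_zero h2 h3)]
      ring

/-! ### Pointwise decomposition of the inner integrand -/

lemma inner_pointwise (r s : ℕ) (hs : 1 ≤ s) (z w : ℂ) (hz : z ≠ 0) (hw : w ≠ 0)
    (hzw : z - w ≠ 0) :
    w / (z - w) * ((r.factorial : ℂ) * (s.factorial : ℂ) / (z ^ r * w ^ s)) *
        Complex.exp (z + w) * (1 - z / (r : ℂ)) * (1 - w / (s : ℂ)) / w =
      (∑ j ∈ Finset.range s,
        ((r.factorial : ℂ) * (s.factorial : ℂ) * Complex.exp z * (1 - z / (r : ℂ)) /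
            (z ^ r * z ^ (j + 1))) *
          (Complex.exp w / w ^ (s - j) -
            ((s : ℂ))⁻¹ * (Complex.exp w / w ^ (s - 1 - j)))) +
      ((r.factorial : ℂ) * (s.factorial : ℂ) * Complex.exp z * (1 - z / (r : ℂ)) /
          (z ^ r * z ^ s)) *
        (Complex.exp w * (1 - w / (s : ℂ)) / (z - w)) := by
  have hsc : ((s : ℂ)) ≠ 0 := Nat.cast_ne_zero.mpr (by omega)
  set c : ℂ := (r.factorial : ℂ) * (s.factorial : ℂ) * Complex.exp z * (1 - z / (r : ℂ))
    with hc
  have step1 : w / (z - w) * ((r.factorial : ℂ) * (s.factorial : ℂ) / (z ^ r * w ^ s)) *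
      Complex.exp (z + w) * (1 - z / (r : ℂ)) * (1 - w / (s : ℂ)) / w =
      c * (Complex.exp w * (1 - w / (s : ℂ)) * (1 / (w ^ s * (z - w)))) / z ^ r := by
    obtain ⟨t, ht, htne⟩ : ∃ t, z - w = t ∧ t ≠ 0 := ⟨z - w, rfl, hzw⟩
    rw [Complex.exp_add, hc, ht]
    rw [show w / t * ((r.factorial : ℂ) * (s.factorial : ℂ) / (z ^ r * w ^ s)) *
        (Complex.exp z * Complex.exp w) * (1 - z / (r : ℂ)) * (1 - w / (s : ℂ)) =
        w * ((r.factorial : ℂ) * (s.factorial : ℂ) / (z ^ r * w ^ s) *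
        (Complex.exp z * Complex.exp w) * (1 - z / (r : ℂ)) * (1 - w / (s : ℂ)) / t) from by
      ring]
    rw [mul_div_cancel_left₀ _ hw]
    ring
  rw [step1, frac_decomp s z w hz hw hzw, mul_add, mul_add, add_div, Finset.mul_sum,
    Finset.mul_sum, Finset.sum_div]
  congr 1
  · refine Finset.sum_congr rfl fun j hj => ?_
    rw [Finset.mem_range] at hj
    obtain ⟨m, rfl⟩ : ∃ m, s = j + m + 1 := ⟨s - j - 1, by omega⟩
    have e1 : j + m + 1 - j = m + 1 := by omega
    have e2 : j + m + 1 - 1 - j = m := by omega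
    rw [e1, e2]
    have hred : w ^ j / (z ^ (j+1) * w ^ (j + m + 1)) = 1 / (z ^ (j+1) * w ^ (m+1)) := by
      rw [div_eq_div_iff (mul_ne_zero (pow_ne_zero _ hz) (pow_ne_zero _ hw))
        (mul_ne_zero (pow_ne_zero _ hz) (pow_ne_zero _ hw))]
      ring
    rw [hred]
    have hsplit : (1 - w / ((j + m + 1 : ℕ) : ℂ)) * (1 / w ^ (m+1)) =
        1 / w ^ (m+1) - (((j + m + 1 : ℕ) : ℂ))⁻¹ * (1 / w ^ m) := by
      rw [sub_mul, one_mul]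
      congr 1
      rw [div_mul_div_comm, mul_one,
        show (((j + m + 1 : ℕ) : ℂ))⁻¹ * (1 / w ^ m) = 1 / (((j + m + 1 : ℕ) : ℂ) * w ^ m) from by
          ring,
        div_eq_div_iff (mul_ne_zero hsc (pow_ne_zero _ hw)) (mul_ne_zero hsc (pow_ne_zero _ hw))]
      ring
    linear_combination (c * Complex.exp w / (z ^ r * z ^ (j + 1))) * hsplit
  · obtain ⟨t, ht, htne⟩ : ∃ t, z - w = t ∧ t ≠ 0 := ⟨z - w, rfl, hzw⟩
    rw [ht]
    ring

/-! ### The inner circle integral -/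

lemma inner_eval (r s : ℕ) (hs : 1 ≤ s) {ρ R : ℝ} (hρ : 0 < ρ) (hρR : ρ < R) (z : ℂ)
    (hz : ‖z‖ = R) :
    (∮ w in C(0, ρ),
        w / (z - w) * ((r.factorial : ℂ) * (s.factorial : ℂ) / (z ^ r * w ^ s)) *
          Complex.exp (z + w) * (1 - z / (r : ℂ)) * (1 - w / (s : ℂ)) / w) =
      (2 * Real.pi * Complex.I) *
        ∑ j ∈ Finset.range s,
          ((r.factorial : ℂ) * (s.factorial : ℂ) * Complex.exp z * (1 - z / (r : ℂ)) /
              (z ^ r * z ^ (j + 1))) *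
            (((j : ℂ) + 1) / ((s : ℂ) * (((s - 1 - j).factorial : ℕ) : ℂ))) := by
  have hz0 : z ≠ 0 := by
    intro h; rw [h] at hz; simp at hz; linarith
  have hzw : ∀ w ∈ Metric.sphere (0:ℂ) ρ, z - w ≠ 0 := by
    intro w hw h
    rw [sub_eq_zero] at h
    have : ‖w‖ = ρ := by
      simpa [Complex.dist_eq] using Metric.mem_sphere.mp hw
    rw [← h] at this
    rw [hz] at this
    linarith
  set c : ℂ := (r.factorial : ℂ) * (s.factorial : ℂ) * Complex.exp z * (1 - z / (r : ℂ))
    with hc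
  set F : ℕ → ℂ → ℂ := fun j w =>
    (c / (z ^ r * z ^ (j + 1))) *
      (Complex.exp w / w ^ (s - j) - ((s : ℂ))⁻¹ * (Complex.exp w / w ^ (s - 1 - j)))
    with hF
  set G : ℂ → ℂ := fun w =>
    (c / (z ^ r * z ^ s)) * (Complex.exp w * (1 - w / (s : ℂ)) / (z - w)) with hG
  have hFc : ∀ j, ContinuousOn (F j) (Metric.sphere (0:ℂ) ρ) := by
    intro j
    exact continuousOn_const.mul ((contOn_exp_div_pow hρ _).sub
      (continuousOn_const.mul (contOn_exp_div_pow hρ _)))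
  have hGc : ContinuousOn G (Metric.sphere (0:ℂ) ρ) := by
    refine continuousOn_const.mul (ContinuousOn.div ?_ ?_ ?_)
    · exact Complex.continuous_exp.continuousOn.mul (by fun_prop)
    · fun_prop
    · exact fun w hw => hzw w hw
  have hFint : ∀ j ∈ Finset.range s, CircleIntegrable (F j) 0 ρ :=
    fun j _ => (hFc j).circleIntegrable hρ.le
  have hsum_int : CircleIntegrable (fun w => ∑ j ∈ Finset.range s, F j w) 0 ρ :=
    (continuousOn_finset_sum _ fun j _ => hFc j).circleIntegrable hρ.le
  have hGint : CircleIntegrable G 0 ρ := hGc.circleIntegrable hρ.le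
  have step1 : (∮ w in C(0, ρ),
      w / (z - w) * ((r.factorial : ℂ) * (s.factorial : ℂ) / (z ^ r * w ^ s)) *
        Complex.exp (z + w) * (1 - z / (r : ℂ)) * (1 - w / (s : ℂ)) / w) =
      ∮ w in C(0, ρ), ((∑ j ∈ Finset.range s, F j w) + G w) := by
    refine circleIntegral.integral_congr hρ.le fun w hw => ?_
    exact inner_pointwise r s hs z w hz0 (ne_zero_of_mem_sphere0 hρ hw) (hzw w hw)
  rw [step1, circleIntegral_add' hsum_int hGint, circleIntegral_finset_sum _ _ hFint]
  have hG0 : (∮ w in C(0, ρ), G w) = 0 := by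
    rw [hG]
    rw [circleIntegral.integral_const_mul]
    rw [circleIntegral_holo_zero ρ hρ z _ (by rw [hz]; exact hρR), mul_zero]
  rw [hG0, add_zero, Finset.mul_sum]
  refine Finset.sum_congr rfl fun j hj => ?_
  rw [Finset.mem_range] at hj
  have hFj : (∮ w in C(0, ρ), F j w) =
      (c / (z ^ r * z ^ (j + 1))) *
        ((∮ w in C(0, ρ), Complex.exp w / w ^ (s - j)) -
          ((s : ℂ))⁻¹ * ∮ w in C(0, ρ), Complex.exp w / w ^ (s - 1 - j)) := by
    rw [hF]
    rw [circleIntegral.integral_const_mul]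
    congr 1
    rw [circleIntegral.integral_sub (f := fun w => Complex.exp w / w ^ (s - j))
      (g := fun w => ((s : ℂ))⁻¹ * (Complex.exp w / w ^ (s - 1 - j)))
      ((contOn_exp_div_pow hρ _).circleIntegrable hρ.le)
      ((continuousOn_const.mul (contOn_exp_div_pow hρ _)).circleIntegrable hρ.le)]
    congr 1
    rw [circleIntegral.integral_const_mul]
  rw [hFj, circleIntegral_exp_div_pow ρ hρ (s - j), circleIntegral_exp_div_pow ρ hρ (s - 1 - j)]
  have hsc : ((s : ℂ)) ≠ 0 := Nat.cast_ne_zero.mpr (by omega)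
  obtain ⟨m, rfl⟩ : ∃ m, s = j + m + 1 := ⟨s - j - 1, by omega⟩
  have e1 : j + m + 1 - j = m + 1 := by omega
  have e2 : j + m + 1 - 1 - j = m := by omega
  rw [e1, e2]
  rw [if_neg (Nat.succ_ne_zero m)]
  have e3 : m + 1 - 1 = m := rfl
  rw [e3]
  cases m with
  | zero =>
    rw [if_pos rfl, mul_zero, sub_zero]
    have hj1 : ((j:ℂ) + 1) ≠ 0 := by
      have : ((j + 1 : ℕ) : ℂ) ≠ 0 := Nat.cast_ne_zero.mpr (by omega)
      push_cast at this; exact this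
    push_cast
    field_simp
    ring
  | succ k =>
    rw [if_neg (Nat.succ_ne_zero k)]
    have e4 : k + 1 - 1 = k := rfl
    rw [e4]
    have hfact : (((k+1).factorial : ℕ) : ℂ) = ((k:ℂ) + 1) * ((k.factorial : ℕ) : ℂ) := by
      rw [Nat.factorial_succ]; push_cast; ring
    have hkf : ((k.factorial : ℕ) : ℂ) ≠ 0 := Nat.cast_ne_zero.mpr (Nat.factorial_ne_zero k)
    have hk1 : ((k:ℂ) + 1) ≠ 0 := by
      have : ((k + 1 : ℕ) : ℂ) ≠ 0 := Nat.cast_ne_zero.mpr (by omega)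
      push_cast at this; exact this
    have hs2 : ((j:ℂ) + ((k:ℂ) + 1) + 1) ≠ 0 := by
      have : ((j + (k + 1) + 1 : ℕ) : ℂ) ≠ 0 := Nat.cast_ne_zero.mpr (by omega)
      push_cast at this
      convert this using 1
    rw [hfact]
    push_cast
    field_simp
    ring

/-! ### Explicit value of `covD` -/

lemma covD_eq (r s : ℕ) (hr : 1 ≤ r) (hs : 1 ≤ s) {ρ R : ℝ} (hρ : 0 < ρ) (hρR : ρ < R) :
    covD r s R ρ =
      ((r.factorial : ℂ) * (s.factorial : ℂ) / ((r : ℂ) * (s : ℂ))) *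
        ∑ j ∈ Finset.range s,
          ((j : ℂ) + 1) ^ 2 /
            ((((s - 1 - j).factorial : ℕ) : ℂ) * (((r + j + 1).factorial : ℕ) : ℂ)) := by
  have hR0 : (0:ℝ) < R := hρ.trans hρR
  have hrc : ((r:ℂ)) ≠ 0 := Nat.cast_ne_zero.mpr (by omega)
  have hsc : ((s:ℂ)) ≠ 0 := Nat.cast_ne_zero.mpr (by omega)
  have houter : (∮ z in C(0, R),
      (∮ w in C(0, ρ), w / (z - w) * ((r.factorial : ℂ) * (s.factorial : ℂ) / (z ^ r * w ^ s)) *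
          Complex.exp (z + w) * (1 - z / (r : ℂ)) * (1 - w / (s : ℂ)) / w) / z) =
      ∮ z in C(0, R), ∑ j ∈ Finset.range s,
        ((2 * Real.pi * Complex.I) * ((r.factorial : ℂ) * (s.factorial : ℂ)) *
            (((j : ℂ) + 1) / ((s : ℂ) * (((s - 1 - j).factorial : ℕ) : ℂ)))) *
          (Complex.exp z / z ^ (r + j + 2) - ((r:ℂ))⁻¹ * (Complex.exp z / z ^ (r + j + 1))) := by
    refine circleIntegral.integral_congr hR0.le fun z hz => ?_
    have hzR : ‖z‖ = R := by simpa [Complex.dist_eq] using Metric.mem_sphere.mp hz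
    have hz0 : z ≠ 0 := by intro h; rw [h] at hzR; simp at hzR; linarith
    rw [inner_eval r s hs hρ hρR z hzR, Finset.mul_sum, Finset.sum_div]
    refine Finset.sum_congr rfl fun j hj => ?_
    have hcancel : z / (z ^ r * z ^ (j+1) * z) = 1 / (z ^ r * z ^ (j+1)) := by
      rw [div_eq_div_iff (mul_ne_zero (mul_ne_zero (pow_ne_zero _ hz0) (pow_ne_zero _ hz0)) hz0)
        (mul_ne_zero (pow_ne_zero _ hz0) (pow_ne_zero _ hz0))]
      ring
    rw [show z ^ (r + j + 2) = z ^ r * z ^ (j+1) * z from by ring,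
      show z ^ (r + j + 1) = z ^ r * z ^ (j+1) from by ring]
    linear_combination (-(2 * (Real.pi:ℂ) * Complex.I) * ((r.factorial : ℂ) * (s.factorial : ℂ)) *
      Complex.exp z * (((j : ℂ) + 1) / ((s : ℂ) * (((s - 1 - j).factorial : ℕ) : ℂ))) *
      ((r:ℂ))⁻¹) * hcancel
  unfold covD
  rw [houter]
  rw [circleIntegral_finset_sum _ (fun (j : ℕ) (z : ℂ) =>
      ((2 * Real.pi * Complex.I) * ((r.factorial : ℂ) * (s.factorial : ℂ)) *
          (((j : ℂ) + 1) / ((s : ℂ) * (((s - 1 - j).factorial : ℕ) : ℂ)))) *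
        (Complex.exp z / z ^ (r + j + 2) - ((r:ℂ))⁻¹ * (Complex.exp z / z ^ (r + j + 1)))) (fun j _ =>
    (continuousOn_const.mul ((contOn_exp_div_pow hR0 _).sub
      (continuousOn_const.mul (contOn_exp_div_pow hR0 _)))).circleIntegrable hR0.le)]
  have hEval : ∀ j ∈ Finset.range s,
      (∮ z in C(0, R),
        ((2 * Real.pi * Complex.I) * ((r.factorial : ℂ) * (s.factorial : ℂ)) *
            (((j : ℂ) + 1) / ((s : ℂ) * (((s - 1 - j).factorial : ℕ) : ℂ)))) *
          (Complex.exp z / z ^ (r + j + 2) - ((r:ℂ))⁻¹ * (Complex.exp z / z ^ (r + j + 1)))) =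
      ((2 * Real.pi * Complex.I) * ((r.factorial : ℂ) * (s.factorial : ℂ)) *
            (((j : ℂ) + 1) / ((s : ℂ) * (((s - 1 - j).factorial : ℕ) : ℂ)))) *
        ((2 * Real.pi * Complex.I / (((r + j + 1).factorial : ℕ) : ℂ)) -
          ((r:ℂ))⁻¹ * (2 * Real.pi * Complex.I / (((r + j).factorial : ℕ) : ℂ))) := by
    intro j _
    rw [circleIntegral.integral_const_mul]
    congr 1
    rw [circleIntegral.integral_sub (f := fun z => Complex.exp z / z ^ (r + j + 2))
      (g := fun z => ((r:ℂ))⁻¹ * (Complex.exp z / z ^ (r + j + 1)))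
      ((contOn_exp_div_pow hR0 _).circleIntegrable hR0.le)
      ((continuousOn_const.mul (contOn_exp_div_pow hR0 _)).circleIntegrable hR0.le),
      circleIntegral.integral_const_mul,
      circleIntegral_exp_div_pow R hR0 (r + j + 2), circleIntegral_exp_div_pow R hR0 (r + j + 1),
      if_neg (by omega : ¬ r + j + 2 = 0), if_neg (by omega : ¬ r + j + 1 = 0),
      show r + j + 2 - 1 = r + j + 1 from by omega, show r + j + 1 - 1 = r + j from by omega]
  rw [Finset.sum_congr rfl hEval, Finset.mul_sum, Finset.mul_sum]
  refine Finset.sum_congr rfl fun j hj => ?_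
  have hπc : ((Real.pi : ℂ)) ≠ 0 := Complex.ofReal_ne_zero.mpr Real.pi_ne_zero
  have hππ : (1 / (4 * (Real.pi:ℂ)^2)) * ((2 * Real.pi * Complex.I) * (2 * Real.pi * Complex.I))
      = -1 := by
    have h4 : (4 * (Real.pi:ℂ)^2) ≠ 0 := by
      exact mul_ne_zero (by norm_num) (pow_ne_zero _ hπc)
    field_simp
    linear_combination 4 * Complex.I_sq
  have hfact' : (((r + j + 1).factorial : ℕ) : ℂ) =
      ((r + j + 1 : ℕ) : ℂ) * (((r + j).factorial : ℕ) : ℂ) := by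
    rw [Nat.factorial_succ]; push_cast; ring
  have hm : ((((s - 1 - j).factorial : ℕ)) : ℂ) ≠ 0 :=
    Nat.cast_ne_zero.mpr (Nat.factorial_ne_zero _)
  have hrj : ((((r + j).factorial : ℕ)) : ℂ) ≠ 0 :=
    Nat.cast_ne_zero.mpr (Nat.factorial_ne_zero _)
  have hrj1 : ((r + j + 1 : ℕ) : ℂ) ≠ 0 := Nat.cast_ne_zero.mpr (by omega)
  rw [hfact']
  calc (1 / (4 * (Real.pi:ℂ)^2)) *
      (((2 * Real.pi * Complex.I) * ((r.factorial : ℂ) * (s.factorial : ℂ)) *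
            (((j : ℂ) + 1) / ((s : ℂ) * (((s - 1 - j).factorial : ℕ) : ℂ)))) *
        ((2 * Real.pi * Complex.I / (((r + j + 1 : ℕ) : ℂ) * (((r + j).factorial : ℕ) : ℂ))) -
          ((r:ℂ))⁻¹ * (2 * Real.pi * Complex.I / (((r + j).factorial : ℕ) : ℂ))))
      = ((1 / (4 * (Real.pi:ℂ)^2)) * ((2 * Real.pi * Complex.I) * (2 * Real.pi * Complex.I))) *
        (((r.factorial : ℂ) * (s.factorial : ℂ)) *
          (((j : ℂ) + 1) / ((s : ℂ) * (((s - 1 - j).factorial : ℕ) : ℂ))) *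
          ((1 / (((r + j + 1 : ℕ) : ℂ) * (((r + j).factorial : ℕ) : ℂ))) -
            ((r:ℂ))⁻¹ * (1 / (((r + j).factorial : ℕ) : ℂ)))) := by ring
    _ = (-1) * (((r.factorial : ℂ) * (s.factorial : ℂ)) *
          (((j : ℂ) + 1) / ((s : ℂ) * (((s - 1 - j).factorial : ℕ) : ℂ))) *
          ((1 / (((r + j + 1 : ℕ) : ℂ) * (((r + j).factorial : ℕ) : ℂ))) -
            ((r:ℂ))⁻¹ * (1 / (((r + j).factorial : ℕ) : ℂ)))) := by rw [hππ]
    _ = ((r.factorial : ℂ) * (s.factorial : ℂ) / ((r : ℂ) * (s : ℂ))) *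
        (((j : ℂ) + 1) ^ 2 /
          ((((s - 1 - j).factorial : ℕ) : ℂ) *
            (((r + j + 1 : ℕ) : ℂ) * (((r + j).factorial : ℕ) : ℂ)))) := by
      have hcast : ((r + j + 1 : ℕ) : ℂ) = (r : ℂ) + (j : ℂ) + 1 := by push_cast; ring
      rw [hcast]
      have hrj1' : ((r:ℂ) + (j:ℂ) + 1) ≠ 0 := hcast ▸ hrj1
      field_simp
      ring


/-- For integers `r ≥ s ≥ 1` with `r ≥ 2`,
`(r−1)·D(r−1,s) + (s−1)·D(r,s−1) − (r+s)·D(r,s) = 0`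
(when `s = 1` the middle term vanishes since its coefficient is `0`). -/
theorem covD_recurrence (r s : ℕ) (hs : 1 ≤ s) (hsr : s ≤ r) (hr : 2 ≤ r)
    (ρ R : ℝ) (hρ : 0 < ρ) (hρR : ρ < R) :
    ((r : ℂ) - 1) * covD (r - 1) s R ρ + ((s : ℂ) - 1) * covD r (s - 1) R ρ
      - ((r : ℂ) + (s : ℂ)) * covD r s R ρ = 0 := by

  obtain ⟨a, rfl⟩ : ∃ a, r = a + 2 := ⟨r - 2, by omega⟩
  have e1 : a + 2 - 1 = a + 1 := by omega
  rw [e1]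
  rcases Nat.lt_or_ge s 2 with h1 | h2
  · -- s = 1
    have hs1 : s = 1 := by omega
    subst hs1
    rw [covD_eq (a+1) 1 (by omega) le_rfl hρ hρR, covD_eq (a+2) 1 (by omega) le_rfl hρ hρR]
    rw [show ((1:ℕ) : ℂ) - 1 = 0 from by norm_num, zero_mul, add_zero]
    rw [Finset.sum_range_one, Finset.sum_range_one]
    have f1 : (a+1+0+1).factorial = (a+2) * (a+1).factorial := by
      rw [show a+1+0+1 = (a+1)+1 from by omega, Nat.factorial_succ]
    have f2 : (a+2+0+1).factorial = (a+3) * ((a+2) * (a+1).factorial) := by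
      rw [show a+2+0+1 = ((a+1)+1)+1 from by omega, Nat.factorial_succ, Nat.factorial_succ]
    rw [f1, f2]
    have hA : ((a:ℂ) + 1) ≠ 0 := by
      have : ((a + 1 : ℕ) : ℂ) ≠ 0 := Nat.cast_ne_zero.mpr (by omega)
      push_cast at this; exact this
    have hB : ((a:ℂ) + 2) ≠ 0 := by
      have : ((a + 2 : ℕ) : ℂ) ≠ 0 := Nat.cast_ne_zero.mpr (by omega)
      push_cast at this; exact this
    have hC : ((a:ℂ) + 3) ≠ 0 := by
      have : ((a + 3 : ℕ) : ℂ) ≠ 0 := Nat.cast_ne_zero.mpr (by omega)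
      push_cast at this; exact this
    have hF : (((a+1).factorial : ℕ) : ℂ) ≠ 0 := Nat.cast_ne_zero.mpr (Nat.factorial_ne_zero _)
    push_cast
    field_simp
    ring
  · -- s ≥ 2
    obtain ⟨b, rfl⟩ : ∃ b, s = b + 2 := ⟨s - 2, by omega⟩
    have e2 : b + 2 - 1 = b + 1 := by omega
    rw [e2]
    rw [covD_eq (a+1) (b+2) (by omega) (by omega) hρ hρR,
      covD_eq (a+2) (b+1) (by omega) (by omega) hρ hρR,
      covD_eq (a+2) (b+2) (by omega) (by omega) hρ hρR]
    simp only [e2, show b + 1 - 1 = b from by omega,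
      show ∀ j : ℕ, a + 1 + j + 1 = a + j + 2 from fun j => by omega,
      show ∀ j : ℕ, a + 2 + j + 1 = a + j + 3 from fun j => by omega]
    have h1 : (∑ j ∈ Finset.range (b+2), ((j : ℂ) + 1) ^ 2 /
          ((((b + 1 - j).factorial : ℕ) : ℂ) * (((a + j + 2).factorial : ℕ) : ℂ))) =
        ∑ j ∈ Finset.range (b+2), ((j : ℂ) + 1) ^ 2 * ((a + j + 3 : ℕ) : ℂ) /
          ((((b + 1 - j).factorial : ℕ) : ℂ) * (((a + j + 3).factorial : ℕ) : ℂ)) := by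
      refine Finset.sum_congr rfl fun j _ => ?_
      rw [show (a+j+3).factorial = (a+j+3) * (a+j+2).factorial from by
        rw [show a+j+3 = (a+j+2)+1 from by omega, Nat.factorial_succ]]
      have hG : (((a+j+2).factorial : ℕ) : ℂ) ≠ 0 := Nat.cast_ne_zero.mpr (Nat.factorial_ne_zero _)
      have hF : (((b+1-j).factorial : ℕ) : ℂ) ≠ 0 := Nat.cast_ne_zero.mpr (Nat.factorial_ne_zero _)
      have hE : ((a + j + 3 : ℕ) : ℂ) ≠ 0 := Nat.cast_ne_zero.mpr (by omega)
      push_cast at hE ⊢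
      field_simp
    have h2 : (∑ j ∈ Finset.range (b+1), ((j : ℂ) + 1) ^ 2 /
          ((((b - j).factorial : ℕ) : ℂ) * (((a + j + 3).factorial : ℕ) : ℂ))) =
        ∑ j ∈ Finset.range (b+2), ((j : ℂ) + 1) ^ 2 * ((b + 1 - j : ℕ) : ℂ) /
          ((((b + 1 - j).factorial : ℕ) : ℂ) * (((a + j + 3).factorial : ℕ) : ℂ)) := by
      conv_rhs => rw [Finset.sum_range_succ]
      rw [show b + 1 - (b + 1) = 0 from by omega]
      rw [show ((0 : ℕ) : ℂ) = 0 from by norm_num]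
      rw [mul_zero, zero_div, add_zero]
      refine Finset.sum_congr rfl fun j hj => ?_
      rw [Finset.mem_range] at hj
      rw [show (b+1-j).factorial = (b+1-j) * (b-j).factorial from by
        rw [show b+1-j = (b-j)+1 from by omega, Nat.factorial_succ]]
      have hG : (((a+j+3).factorial : ℕ) : ℂ) ≠ 0 := Nat.cast_ne_zero.mpr (Nat.factorial_ne_zero _)
      have hF : (((b-j).factorial : ℕ) : ℂ) ≠ 0 := Nat.cast_ne_zero.mpr (Nat.factorial_ne_zero _)
      have hE : ((b + 1 - j : ℕ) : ℂ) ≠ 0 := Nat.cast_ne_zero.mpr (by omega)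
      rw [show b+1-j = (b-j)+1 from by omega]
      push_cast
      have hE2 : ((b - j : ℕ) : ℂ) + 1 ≠ 0 := by
        have : ((b - j + 1 : ℕ) : ℂ) ≠ 0 := Nat.cast_ne_zero.mpr (by omega)
        push_cast at this; exact this
      field_simp
    rw [h1, h2]
    simp only [Finset.mul_sum]
    rw [← Finset.sum_add_distrib, ← Finset.sum_sub_distrib]
    refine Finset.sum_eq_zero fun j hj => ?_
    rw [Finset.mem_range] at hj
    have fa : (a+2).factorial = (a+2) * (a+1).factorial := by
      rw [show a+2 = (a+1)+1 from by omega, Nat.factorial_succ]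
    have fb : (b+2).factorial = (b+2) * (b+1).factorial := by
      rw [show b+2 = (b+1)+1 from by omega, Nat.factorial_succ]
    rw [fa, fb]
    have hA : ((a:ℂ) + 1) ≠ 0 := by
      have : ((a + 1 : ℕ) : ℂ) ≠ 0 := Nat.cast_ne_zero.mpr (by omega)
      push_cast at this; exact this
    have hB : ((a:ℂ) + 2) ≠ 0 := by
      have : ((a + 2 : ℕ) : ℂ) ≠ 0 := Nat.cast_ne_zero.mpr (by omega)
      push_cast at this; exact this
    have hA' : ((b:ℂ) + 1) ≠ 0 := by
      have : ((b + 1 : ℕ) : ℂ) ≠ 0 := Nat.cast_ne_zero.mpr (by omega)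
      push_cast at this; exact this
    have hB' : ((b:ℂ) + 2) ≠ 0 := by
      have : ((b + 2 : ℕ) : ℂ) ≠ 0 := Nat.cast_ne_zero.mpr (by omega)
      push_cast at this; exact this
    have hFa : (((a+1).factorial : ℕ) : ℂ) ≠ 0 := Nat.cast_ne_zero.mpr (Nat.factorial_ne_zero _)
    have hFb : (((b+1).factorial : ℕ) : ℂ) ≠ 0 := Nat.cast_ne_zero.mpr (Nat.factorial_ne_zero _)
    have hF : (((b+1-j).factorial : ℕ) : ℂ) ≠ 0 := Nat.cast_ne_zero.mpr (Nat.factorial_ne_zero _)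
    have hG : (((a+j+3).factorial : ℕ) : ℂ) ≠ 0 := Nat.cast_ne_zero.mpr (Nat.factorial_ne_zero _)
    rw [Nat.cast_sub (show j ≤ b + 1 from by omega)]
    push_cast
    field_simp
    ring
end

section
/- For every real number c ≥ 0, the absolutely convergent double integral over ℝ² satisfies (1/(2π)) ∫_ℝ ∫_ℝ ( u·(v+i) / (1 + c + iu − iv) ) · e^{−u²/2 − (v+i)²/2} du dv = ∫_0^∞ y² e^{−y² − cy} dy, where the left-hand side is a complex-valued Lebesgue integral, i is the imaginary unit, and the equality is in ℂ (the right-hand side being a positive real number). -/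
open MeasureTheory Complex Set Filter Topology

section GaussianAux

lemma re_aux (s : ℂ) (x : ℝ) : (-(x:ℂ)^2/2 - s*(x:ℂ)).re = -x^2/2 - s.re*x := by
  have : -(x:ℂ)^2/2 = ((-x^2/2 : ℝ) : ℂ) := by push_cast; ring
  rw [this, Complex.sub_re, Complex.ofReal_re, Complex.mul_re]
  simp

lemma norm_cexp_aux (s : ℂ) (x : ℝ) :
    ‖Complex.exp (-(x:ℂ)^2/2 - s*(x:ℂ))‖ = Real.exp (-x^2/2 - s.re*x) := by
  rw [Complex.norm_exp, re_aux]

lemma bound_aux (r x : ℝ) : Real.exp (-x^2/2 - r*x) ≤ Real.exp (r^2 - x^2/4) := by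
  apply Real.exp_le_exp.mpr
  nlinarith [sq_nonneg (x/2 + r)]

lemma integrable_bound (C : ℝ) :
    Integrable (fun x : ℝ => Real.exp C * |x * Real.exp (-(1/4) * x^2)|) :=
  ((integrable_mul_exp_neg_mul_sq (by norm_num : (0:ℝ) < 1/4)).abs).const_mul _

lemma integrable_gauss_lin (s : ℂ) :
    Integrable fun x : ℝ => (x:ℂ) * Complex.exp (-(x:ℂ)^2/2 - s*x) := by
  apply Integrable.mono' (integrable_bound (s.re^2))
  · exact (Complex.continuous_ofReal.mul
      (Complex.continuous_exp.comp (by continuity))).aestronglyMeasurable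
  · filter_upwards with x
    rw [norm_mul, norm_cexp_aux]
    simp only [Complex.norm_real, Real.norm_eq_abs]
    calc |x| * Real.exp (-x^2/2 - s.re*x) ≤ |x| * Real.exp (s.re^2 - x^2/4) :=
          mul_le_mul_of_nonneg_left (bound_aux s.re x) (abs_nonneg x)
      _ = Real.exp (s.re^2) * |x * Real.exp (-(1/4) * x^2)| := by
          rw [abs_mul, abs_of_pos (Real.exp_pos _),
            show s.re^2 - x^2/4 = s.re^2 + (-(1/4)*x^2) by ring, Real.exp_add]
          ring

lemma integrable_gauss_exp (s : ℂ) :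
    Integrable fun x : ℝ => Complex.exp (-(x:ℂ)^2/2 - s*x) := by
  have h := integrable_cexp_quadratic (b := 1/2) (by norm_num) (-s) 0
  apply h.congr
  filter_upwards with x
  congr 1
  ring

lemma tendsto_bound_atTop (C : ℝ) : Tendsto (fun x : ℝ => C - x^2/4) atTop atBot := by
  have hsq : Tendsto (fun x : ℝ => x^2/4) atTop atTop :=
    (tendsto_pow_atTop (α := ℝ) (n := 2) (by norm_num)).atTop_div_const (by norm_num)
  have hneg : Tendsto (fun x : ℝ => -(x^2/4)) atTop atBot := tendsto_neg_atBot_iff.mpr hsq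
  exact (tendsto_atBot_add_const_left atTop C hneg).congr fun x => by ring

lemma tendsto_bound_atBot (C : ℝ) : Tendsto (fun x : ℝ => C - x^2/4) atBot atBot := by
  have hsq : Tendsto (fun x : ℝ => x^2/4) atBot atTop := by
    have h := (tendsto_pow_atTop (α := ℝ) (n := 2) (by norm_num)).comp tendsto_abs_atBot_atTop
    have h2 : Tendsto (fun x : ℝ => x^2) atBot atTop := h.congr fun x => by simp [sq_abs]
    exact h2.atTop_div_const (by norm_num)
  have hneg : Tendsto (fun x : ℝ => -(x^2/4)) atBot atBot := tendsto_neg_atBot_iff.mpr hsq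
  exact (tendsto_atBot_add_const_left atBot C hneg).congr fun x => by ring

lemma gauss_shift_zero (s : ℂ) :
    ∫ x : ℝ, ((x:ℂ) + s) * Complex.exp (-(x:ℂ)^2/2 - s*x) = 0 := by
  have hderiv : ∀ x : ℝ, HasDerivAt (fun x : ℝ => -Complex.exp (-(x:ℂ)^2/2 - s*x))
      (((x:ℂ) + s) * Complex.exp (-(x:ℂ)^2/2 - s*x)) x := by
    intro x
    have hs' : HasDerivAt (fun z : ℂ => s*z) s (x:ℂ) := by
      simpa using (hasDerivAt_id ((x:ℝ):ℂ)).const_mul s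
    have h2 : HasDerivAt (fun z : ℂ => -z^2/2 - s*z) (-(2*(x:ℂ)^1)/2 - s) (x:ℂ) :=
      (((hasDerivAt_pow 2 ((x:ℝ):ℂ)).neg).div_const 2).sub hs'
    have h3 := h2.cexp.fun_neg
    have h1 : HasDerivAt (fun z : ℂ => -Complex.exp (-z^2/2 - s*z))
        (((x:ℂ) + s) * Complex.exp (-(x:ℂ)^2/2 - s*(x:ℂ))) (x:ℂ) := by
      refine h3.congr_deriv ?_
      ring
    exact h1.comp_ofReal
  have hint : Integrable fun x : ℝ => ((x:ℂ) + s) * Complex.exp (-(x:ℂ)^2/2 - s*x) := by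
    have heq : (fun x : ℝ => ((x:ℂ) + s) * Complex.exp (-(x:ℂ)^2/2 - s*x))
        = fun x : ℝ => (x:ℂ) * Complex.exp (-(x:ℂ)^2/2 - s*x)
          + s * Complex.exp (-(x:ℂ)^2/2 - s*x) := by
      ext x; ring
    rw [heq]
    exact (integrable_gauss_lin s).add ((integrable_gauss_exp s).const_mul s)
  have hnorm : ∀ x : ℝ, ‖-Complex.exp (-(x:ℂ)^2/2 - s*(x:ℂ))‖ ≤ Real.exp (s.re^2 - x^2/4) := by
    intro x
    rw [norm_neg, norm_cexp_aux]
    exact bound_aux s.re x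
  have htop : Tendsto (fun x : ℝ => -Complex.exp (-(x:ℂ)^2/2 - s*x)) atTop (𝓝 0) := by
    rw [tendsto_zero_iff_norm_tendsto_zero]
    exact squeeze_zero (fun x => norm_nonneg _) hnorm
      (Real.tendsto_exp_atBot.comp (tendsto_bound_atTop _))
  have hbot : Tendsto (fun x : ℝ => -Complex.exp (-(x:ℂ)^2/2 - s*x)) atBot (𝓝 0) := by
    rw [tendsto_zero_iff_norm_tendsto_zero]
    exact squeeze_zero (fun x => norm_nonneg _) hnorm
      (Real.tendsto_exp_atBot.comp (tendsto_bound_atBot _))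
  have hIic := integral_Iic_of_hasDerivAt_of_tendsto' (a := 0)
    (fun x _ => hderiv x) (hint.integrableOn) hbot
  have hIoi := integral_Ioi_of_hasDerivAt_of_tendsto' (a := 0)
    (fun x _ => hderiv x) (hint.integrableOn) htop
  rw [← intervalIntegral.integral_Iic_add_Ioi (b := 0) (hint.integrableOn) (hint.integrableOn),
    hIic, hIoi]
  ring

lemma gauss_int (s : ℂ) :
    ∫ x : ℝ, Complex.exp (-(x:ℂ)^2/2 - s*x)
      = (2*(Real.pi:ℂ)) ^ (1/2 : ℂ) * Complex.exp (s^2/2) := by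
  have h := integral_cexp_quadratic (b := -(1/2)) (by norm_num) (-s) 0
  have heq : (fun x : ℝ => Complex.exp (-(x:ℂ)^2/2 - s*x))
      = fun x : ℝ => Complex.exp (-(1/2)*(x:ℂ)^2 + (-s)*x + 0) := by
    ext x; congr 1; ring
  rw [heq, h]
  congr 1
  · congr 1; ring
  · congr 1; ring

lemma gauss_moment (s : ℂ) :
    ∫ x : ℝ, (x:ℂ) * Complex.exp (-(x:ℂ)^2/2 - s*x)
      = -s * ((2*(Real.pi:ℂ)) ^ (1/2 : ℂ) * Complex.exp (s^2/2)) := by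
  have h0 := gauss_shift_zero s
  have hsplit : ∫ x : ℝ, ((x:ℂ) + s) * Complex.exp (-(x:ℂ)^2/2 - s*x)
      = (∫ x : ℝ, (x:ℂ) * Complex.exp (-(x:ℂ)^2/2 - s*x))
        + s * ∫ x : ℝ, Complex.exp (-(x:ℂ)^2/2 - s*x) := by
    rw [← integral_const_mul, ← integral_add (integrable_gauss_lin s)
      ((integrable_gauss_exp s).const_mul s)]
    congr 1; ext x; ring
  rw [h0, gauss_int] at hsplit
  linear_combination -hsplit

lemma aux_exp_decay {a : ℂ} (ha : 0 < a.re) :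
    ∫ t in Ioi (0:ℝ), Complex.exp (-(a * t)) = 1 / a := by
  have hane : a ≠ 0 := by
    intro h; rw [h] at ha; simp at ha
  have hderiv : ∀ x ∈ Ici (0:ℝ), HasDerivAt (fun t : ℝ => -Complex.exp (-(a * t)) / a)
      (Complex.exp (-(a * x))) x := by
    intro x _
    have h1 : HasDerivAt (fun z : ℂ => -Complex.exp (-(a * z)) / a)
        (Complex.exp (-(a * (x:ℂ)))) (x:ℂ) := by
      have h2 : HasDerivAt (fun z : ℂ => -(a * z)) (-a) (x:ℂ) := by
        simpa using ((hasDerivAt_id ((x:ℝ):ℂ)).const_mul a).fun_neg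
      have h4 := (h2.cexp.fun_neg).div_const a
      refine h4.congr_deriv ?_
      field_simp
    exact h1.comp_ofReal
  have hint : IntegrableOn (fun t : ℝ => Complex.exp (-(a * t))) (Ioi 0) := by
    apply Integrable.mono' ((exp_neg_integrableOn_Ioi 0 ha))
    · exact (Complex.continuous_exp.comp (by continuity)).aestronglyMeasurable
    · filter_upwards with t
      simp [Complex.norm_exp]
  have htend : Tendsto (fun t : ℝ => -Complex.exp (-(a * t)) / a) atTop (𝓝 0) := by
    rw [tendsto_zero_iff_norm_tendsto_zero]
    have heq : (fun t : ℝ => ‖-Complex.exp (-(a * t)) / a‖) =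
        fun t : ℝ => Real.exp (-(a.re * t)) / ‖a‖ := by
      ext t
      simp [Complex.norm_exp]
    rw [heq]
    have hlin : Tendsto (fun t : ℝ => a.re * t) atTop atTop :=
      Tendsto.const_mul_atTop ha tendsto_id
    have h2 : Tendsto (fun t : ℝ => Real.exp (-(a.re * t))) atTop (𝓝 0) :=
      Real.tendsto_exp_atBot.comp (tendsto_neg_atBot_iff.mpr hlin)
    simpa using h2.div_const (‖a‖)
  have := integral_Ioi_of_hasDerivAt_of_tendsto' hderiv hint htend
  rw [this]
  norm_num
  rw [neg_div, neg_neg, one_div]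

end GaussianAux


lemma reE (v u : ℝ) : (-(u:ℂ)^2/2 - ((v:ℂ)+I)^2/2).re = -u^2/2 - (v^2-1)/2 := by
  simp [pow_two, Complex.div_re, Complex.mul_re, Complex.add_re, Complex.sub_re, Complex.normSq]

lemma reD (c u v t : ℝ) : ((1+(c:ℂ)+I*u-I*v) * (t:ℂ)).re = (1+c)*t := by
  simp [Complex.mul_re, Complex.add_re, Complex.sub_re]

lemma reC (c v t : ℝ) : (-((v:ℂ)+I)^2/2 - (1+(c:ℂ)-I*v)*(t:ℂ)).re = -(v^2-1)/2 - (1+c)*t := by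
  simp [pow_two, Complex.div_re, Complex.mul_re, Complex.add_re, Complex.sub_re, Complex.normSq]

lemma IA (c : ℝ) (hc : 0 ≤ c) (v : ℝ) :
    Integrable (Function.uncurry fun u t : ℝ =>
      ((u:ℂ) * ((v:ℂ)+I) * Complex.exp (-(u:ℂ)^2/2 - ((v:ℂ)+I)^2/2))
        * Complex.exp (-((1+(c:ℂ)+I*u-I*v) * t)))
      ((volume : Measure ℝ).prod ((volume : Measure ℝ).restrict (Ioi 0))) := by
  have h1c : (0:ℝ) < 1 + c := by linarith
  have hg1 : Integrable (fun u : ℝ =>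
      (‖(v:ℂ)+I‖ * Real.exp (-(v^2-1)/2)) * |u * Real.exp (-(1/2)*u^2)|) :=
    ((integrable_mul_exp_neg_mul_sq (by norm_num : (0:ℝ) < 1/2)).abs).const_mul _
  have hg2 : Integrable (fun t : ℝ => Real.exp (-(1+c)*t)) (volume.restrict (Ioi 0)) :=
    exp_neg_integrableOn_Ioi 0 h1c
  apply Integrable.mono' (hg1.mul_prod hg2)
  · apply Continuous.aestronglyMeasurable
    unfold Function.uncurry
    fun_prop
  · filter_upwards with z
    obtain ⟨u, t⟩ := z
    simp only [Function.uncurry]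
    rw [norm_mul, norm_mul, norm_mul]
    simp only [Complex.norm_exp, Complex.norm_real, Real.norm_eq_abs]
    rw [reE, Complex.neg_re, reD]
    apply le_of_eq
    rw [abs_mul, abs_of_pos (Real.exp_pos _),
      show -u^2/2 - (v^2-1)/2 = -(v^2-1)/2 + (-(1/2)*u^2) by ring, Real.exp_add,
      show -((1+c)*t) = -(1+c)*t by ring]
    ring

lemma reT (t : ℝ) : (-(t:ℂ)^2/2).re = -t^2/2 := by
  have : -(t:ℂ)^2/2 = ((-t^2/2 : ℝ) : ℂ) := by push_cast; ring
  rw [this, Complex.ofReal_re]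

lemma abs_mul_exp_le_one (t : ℝ) : |t| * Real.exp (-t^2/2) ≤ 1 := by
  have h1 : |t| ≤ Real.exp (t^2/2) := by
    have h2 := Real.add_one_le_exp (t^2/2)
    nlinarith [_root_.sq_abs t, sq_nonneg (|t|-1)]
  calc |t| * Real.exp (-t^2/2) ≤ Real.exp (t^2/2) * Real.exp (-t^2/2) :=
        mul_le_mul_of_nonneg_right h1 (Real.exp_pos _).le
    _ = 1 := by rw [← Real.exp_add, show t^2/2 + -t^2/2 = 0 by ring, Real.exp_zero]

lemma hg1_aux : Integrable (fun v : ℝ => ‖(v:ℂ)+I‖ * Real.exp (-(v^2-1)/2)) := by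
  have hb : Integrable (fun v : ℝ =>
      Real.exp (1/2) * (|v * Real.exp (-(1/2)*v^2)| + Real.exp (-(1/2)*v^2))) :=
    (((integrable_mul_exp_neg_mul_sq (by norm_num : (0:ℝ) < 1/2)).abs).add
      (integrable_exp_neg_mul_sq (by norm_num : (0:ℝ) < 1/2))).const_mul _
  apply Integrable.mono' hb
  · exact ((continuous_norm.comp (Complex.continuous_ofReal.add continuous_const)).mul
      (Real.continuous_exp.comp (by continuity))).aestronglyMeasurable
  · filter_upwards with v
    rw [Real.norm_eq_abs, _root_.abs_of_nonneg (by positivity)]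
    have habs : ‖(v:ℂ)+I‖ ≤ |v| + 1 := by
      calc ‖(v:ℂ)+I‖ ≤ ‖(v:ℂ)‖ + ‖I‖ :=
            norm_add_le _ _
        _ = |v| + 1 := by rw [Complex.norm_real, Real.norm_eq_abs, Complex.norm_I]
    calc ‖(v:ℂ)+I‖ * Real.exp (-(v^2-1)/2)
        ≤ (|v| + 1) * Real.exp (-(v^2-1)/2) :=
          mul_le_mul_of_nonneg_right habs (Real.exp_pos _).le
      _ = Real.exp (1/2) * (|v * Real.exp (-(1/2)*v^2)| + Real.exp (-(1/2)*v^2)) := by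
          rw [abs_mul, abs_of_pos (Real.exp_pos _),
            show -(v^2-1)/2 = 1/2 + (-(1/2)*v^2) by ring, Real.exp_add]
          ring

lemma IB (c : ℝ) (hc : 0 ≤ c) :
    Integrable (Function.uncurry fun v t : ℝ =>
      (((v:ℂ)+I) * Complex.exp (-((v:ℂ)+I)^2/2 - (1+(c:ℂ)-I*v)*t))
        * (-(I*(t:ℂ)) * ((2*(Real.pi:ℂ))^(1/2:ℂ) * Complex.exp (-(t:ℂ)^2/2))))
      ((volume : Measure ℝ).prod ((volume : Measure ℝ).restrict (Ioi 0))) := by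
  have h1c : (0:ℝ) < 1 + c := by linarith
  have hg2 : Integrable (fun t : ℝ =>
      ‖(2*(Real.pi:ℂ))^(1/2:ℂ)‖ * Real.exp (-(1+c)*t))
      (volume.restrict (Ioi 0)) :=
    (exp_neg_integrableOn_Ioi 0 h1c).const_mul _
  apply Integrable.mono' (hg1_aux.mul_prod hg2)
  · apply Continuous.aestronglyMeasurable
    unfold Function.uncurry
    fun_prop
  · filter_upwards with z
    obtain ⟨v, t⟩ := z
    simp only [Function.uncurry]
    rw [norm_mul, norm_mul, norm_mul, norm_neg, norm_mul]
    simp only [norm_mul, Complex.norm_exp, Complex.norm_real, Real.norm_eq_abs, Complex.norm_I]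
    rw [reC, reT]
    have hre : ‖(v:ℂ)+I‖ * Real.exp (-(v^2-1)/2 - (1+c)*t)
        * (1 * |t| * (‖(2*(Real.pi:ℂ))^(1/2:ℂ)‖ * Real.exp (-t^2/2)))
        = ((‖(v:ℂ)+I‖ * Real.exp (-(v^2-1)/2))
            * (‖(2*(Real.pi:ℂ))^(1/2:ℂ)‖ * Real.exp (-(1+c)*t)))
          * (|t| * Real.exp (-t^2/2)) := by
      rw [show -(v^2-1)/2 - (1+c)*t = -(v^2-1)/2 + -(1+c)*t by ring, Real.exp_add]
      ring
    rw [hre]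
    exact mul_le_of_le_one_right (by positivity) (abs_mul_exp_le_one t)









lemma inner_eq (c : ℝ) (hc : 0 ≤ c) (v : ℝ) :
    (∫ u : ℝ, (u:ℂ) * ((v:ℂ)+I) / (1 + (c:ℂ) + I*u - I*v)
      * Complex.exp (-(u:ℂ)^2/2 - ((v:ℂ)+I)^2/2))
    = ∫ t in Ioi (0:ℝ),
        (((v:ℂ)+I) * Complex.exp (-((v:ℂ)+I)^2/2 - (1+(c:ℂ)-I*v)*t))
          * (-(I*(t:ℂ)) * ((2*(Real.pi:ℂ))^(1/2:ℂ) * Complex.exp (-(t:ℂ)^2/2))) := by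
  have hpoint : ∀ u : ℝ, (u:ℂ) * ((v:ℂ)+I) / (1 + (c:ℂ) + I*u - I*v)
      * Complex.exp (-(u:ℂ)^2/2 - ((v:ℂ)+I)^2/2)
      = ∫ t in Ioi (0:ℝ),
          ((u:ℂ) * ((v:ℂ)+I) * Complex.exp (-(u:ℂ)^2/2 - ((v:ℂ)+I)^2/2))
            * Complex.exp (-((1+(c:ℂ)+I*u-I*v) * t)) := by
    intro u
    have hD : 0 < (1 + (c:ℂ) + I*u - I*v).re := by
      simp [Complex.add_re, Complex.sub_re, Complex.mul_re]
      linarith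
    rw [integral_const_mul, aux_exp_decay hD]
    ring
  rw [integral_congr_ae (ae_of_all _ hpoint),
    integral_integral_swap (IA c hc v)]
  apply integral_congr_ae (ae_of_all _ ?_)
  intro t
  have key : ∀ u : ℝ,
      ((u:ℂ) * ((v:ℂ)+I) * Complex.exp (-(u:ℂ)^2/2 - ((v:ℂ)+I)^2/2))
        * Complex.exp (-((1+(c:ℂ)+I*u-I*v) * t))
      = (((v:ℂ)+I) * Complex.exp (-((v:ℂ)+I)^2/2 - (1+(c:ℂ)-I*v)*t))
          * ((u:ℂ) * Complex.exp (-(u:ℂ)^2/2 - (I*(t:ℂ))*u)) := by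
    intro u
    have hexp : Complex.exp (-(u:ℂ)^2/2 - ((v:ℂ)+I)^2/2)
        * Complex.exp (-((1+(c:ℂ)+I*u-I*v) * t))
        = Complex.exp (-((v:ℂ)+I)^2/2 - (1+(c:ℂ)-I*v)*t)
          * Complex.exp (-(u:ℂ)^2/2 - (I*(t:ℂ))*u) := by
      rw [← Complex.exp_add, ← Complex.exp_add]
      congr 1
      ring
    calc ((u:ℂ) * ((v:ℂ)+I) * Complex.exp (-(u:ℂ)^2/2 - ((v:ℂ)+I)^2/2))
          * Complex.exp (-((1+(c:ℂ)+I*u-I*v) * t))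
        = (u:ℂ) * ((v:ℂ)+I) * (Complex.exp (-(u:ℂ)^2/2 - ((v:ℂ)+I)^2/2)
            * Complex.exp (-((1+(c:ℂ)+I*u-I*v) * t))) := by ring
      _ = (u:ℂ) * ((v:ℂ)+I) * (Complex.exp (-((v:ℂ)+I)^2/2 - (1+(c:ℂ)-I*v)*t)
            * Complex.exp (-(u:ℂ)^2/2 - (I*(t:ℂ))*u)) := by rw [hexp]
      _ = _ := by ring
  rw [integral_congr_ae (ae_of_all _ key), integral_const_mul, gauss_moment (I*(t:ℂ))]
  rw [show (I*(t:ℂ))^2/2 = -(t:ℂ)^2/2 by rw [mul_pow, I_sq]; ring]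

lemma outer_eq (c : ℝ) (t : ℝ) :
    (∫ v : ℝ, (((v:ℂ)+I) * Complex.exp (-((v:ℂ)+I)^2/2 - (1+(c:ℂ)-I*v)*t))
      * (-(I*(t:ℂ)) * ((2*(Real.pi:ℂ))^(1/2:ℂ) * Complex.exp (-(t:ℂ)^2/2))))
    = (2*(Real.pi:ℂ)) * ((t:ℂ)^2 * Complex.exp (-(t:ℂ)^2 - c*t)) := by
  have h2pi : (2*(Real.pi:ℂ)) ≠ 0 := by
    simp [Real.pi_ne_zero]
  have key : ∀ v : ℝ,
      (((v:ℂ)+I) * Complex.exp (-((v:ℂ)+I)^2/2 - (1+(c:ℂ)-I*v)*t))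
        * (-(I*(t:ℂ)) * ((2*(Real.pi:ℂ))^(1/2:ℂ) * Complex.exp (-(t:ℂ)^2/2)))
      = (Complex.exp ((1:ℂ)/2 - (1+(c:ℂ))*t)
          * (-(I*(t:ℂ)) * ((2*(Real.pi:ℂ))^(1/2:ℂ) * Complex.exp (-(t:ℂ)^2/2))))
        * (((v:ℂ)+I) * Complex.exp (-(v:ℂ)^2/2 - (I*((1:ℂ)-t))*v)) := by
    intro v
    have hexp : Complex.exp (-((v:ℂ)+I)^2/2 - (1+(c:ℂ)-I*v)*t)
        = Complex.exp ((1:ℂ)/2 - (1+(c:ℂ))*t) * Complex.exp (-(v:ℂ)^2/2 - (I*((1:ℂ)-t))*v) := by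
      rw [← Complex.exp_add]
      congr 1
      linear_combination (-1/2 : ℂ) * Complex.I_sq
    rw [hexp]
    ring
  rw [integral_congr_ae (ae_of_all _ key), integral_const_mul]
  have hsplit : (∫ v : ℝ, ((v:ℂ)+I) * Complex.exp (-(v:ℂ)^2/2 - (I*((1:ℂ)-t))*v))
      = (∫ v : ℝ, (v:ℂ) * Complex.exp (-(v:ℂ)^2/2 - (I*((1:ℂ)-t))*v))
        + I * ∫ v : ℝ, Complex.exp (-(v:ℂ)^2/2 - (I*((1:ℂ)-t))*v) := by
    rw [← integral_const_mul, ← integral_add (integrable_gauss_lin _)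
      ((integrable_gauss_exp _).const_mul I)]
    congr 1; ext v; ring
  rw [hsplit, gauss_moment, gauss_int]
  have hs2 : (I*((1:ℂ)-t))^2/2 = -((1:ℂ)-t)^2/2 := by
    rw [mul_pow, I_sq]; ring
  rw [hs2]
  have hI2 : -(I*((1:ℂ)-t)) + I = I*(t:ℂ) := by ring
  have hexp3 : Complex.exp ((1:ℂ)/2 - (1+(c:ℂ))*t) * Complex.exp (-(t:ℂ)^2/2)
      * Complex.exp (-((1:ℂ)-t)^2/2) = Complex.exp (-(t:ℂ)^2 - c*t) := by
    rw [← Complex.exp_add, ← Complex.exp_add]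
    congr 1
    ring
  have hpow : (2*(Real.pi:ℂ))^(1/2:ℂ) * (2*(Real.pi:ℂ))^(1/2:ℂ) = 2*(Real.pi:ℂ) := by
    rw [← Complex.cpow_add _ _ h2pi]
    norm_num
  have hII : (-(I*(t:ℂ))) * (I*(t:ℂ)) = (t:ℂ)^2 := by
    linear_combination (-(t:ℂ)^2) * Complex.I_sq
  calc Complex.exp ((1:ℂ)/2 - (1+(c:ℂ))*t)
        * (-(I*(t:ℂ)) * ((2*(Real.pi:ℂ))^(1/2:ℂ) * Complex.exp (-(t:ℂ)^2/2)))
        * (-(I*((1:ℂ)-t)) * ((2*(Real.pi:ℂ))^(1/2:ℂ) * Complex.exp (-((1:ℂ)-t)^2/2))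
            + I * ((2*(Real.pi:ℂ))^(1/2:ℂ) * Complex.exp (-((1:ℂ)-t)^2/2)))
      = Complex.exp ((1:ℂ)/2 - (1+(c:ℂ))*t)
        * (-(I*(t:ℂ)) * ((2*(Real.pi:ℂ))^(1/2:ℂ) * Complex.exp (-(t:ℂ)^2/2)))
        * ((I*(t:ℂ)) * ((2*(Real.pi:ℂ))^(1/2:ℂ) * Complex.exp (-((1:ℂ)-t)^2/2))) := by
        rw [show -(I*((1:ℂ)-(t:ℂ))) * ((2*(Real.pi:ℂ))^(1/2:ℂ) * Complex.exp (-((1:ℂ)-(t:ℂ))^2/2))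
            + I * ((2*(Real.pi:ℂ))^(1/2:ℂ) * Complex.exp (-((1:ℂ)-(t:ℂ))^2/2))
            = (-(I*((1:ℂ)-(t:ℂ))) + I) * ((2*(Real.pi:ℂ))^(1/2:ℂ) * Complex.exp (-((1:ℂ)-(t:ℂ))^2/2))
            from by ring, hI2]
    _ = ((-(I*(t:ℂ))) * (I*(t:ℂ))) * ((2*(Real.pi:ℂ))^(1/2:ℂ) * (2*(Real.pi:ℂ))^(1/2:ℂ))
        * (Complex.exp ((1:ℂ)/2 - (1+(c:ℂ))*t) * Complex.exp (-(t:ℂ)^2/2)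
          * Complex.exp (-((1:ℂ)-t)^2/2)) := by ring
    _ = (t:ℂ)^2 * (2*(Real.pi:ℂ)) * Complex.exp (-(t:ℂ)^2 - c*t) := by
        rw [hII, hpow, hexp3]
    _ = (2*(Real.pi:ℂ)) * ((t:ℂ)^2 * Complex.exp (-(t:ℂ)^2 - c*t)) := by ring

/-- The final covariance computation in the proof of the bulk (Edwards–Wilkinson)
limit: for every real `c ≥ 0`,
`(1/(2π)) ∫_ℝ ∫_ℝ (u(v+i)/(1+c+iu−iv)) e^{−u²/2 − (v+i)²/2} du dv
  = ∫_0^∞ y² e^{−y² − cy} dy`,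
the left-hand side being a complex-valued Lebesgue integral (inner integral in `u`). -/
theorem gaussian_double_integral_identity (c : ℝ) (hc : 0 ≤ c) :
    (1 / (2 * (Real.pi : ℂ))) *
      ∫ v : ℝ, ∫ u : ℝ,
        (u : ℂ) * ((v : ℂ) + I) / (1 + (c : ℂ) + I * u - I * v) *
          Complex.exp (-(u : ℂ) ^ 2 / 2 - ((v : ℂ) + I) ^ 2 / 2)
      = ((∫ y in Set.Ioi (0 : ℝ), y ^ 2 * Real.exp (-y ^ 2 - c * y) : ℝ) : ℂ) := by
  have h2pi : (2*(Real.pi:ℂ)) ≠ 0 := by simp [Real.pi_ne_zero]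
  have hmain : (∫ v : ℝ, ∫ u : ℝ,
        (u : ℂ) * ((v : ℂ) + I) / (1 + (c : ℂ) + I * u - I * v) *
          Complex.exp (-(u : ℂ) ^ 2 / 2 - ((v : ℂ) + I) ^ 2 / 2))
      = ∫ t in Ioi (0:ℝ), (2*(Real.pi:ℂ)) * ((t:ℂ)^2 * Complex.exp (-(t:ℂ)^2 - c*t)) := by
    rw [integral_congr_ae (ae_of_all _ (inner_eq c hc)), integral_integral_swap (IB c hc)]
    exact integral_congr_ae (ae_of_all _ (fun t => outer_eq c t))
  rw [hmain, integral_const_mul]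
  have hreal : (∫ t in Ioi (0:ℝ), (t:ℂ)^2 * Complex.exp (-(t:ℂ)^2 - c*t))
      = ((∫ y in Ioi (0:ℝ), y^2 * Real.exp (-y^2 - c*y) : ℝ) : ℂ) := by
    have hpt : (∫ t in Ioi (0:ℝ), (t:ℂ)^2 * Complex.exp (-(t:ℂ)^2 - c*t))
        = ∫ t in Ioi (0:ℝ), ((t^2 * Real.exp (-t^2 - c*t) : ℝ) : ℂ) := by
      apply integral_congr_ae (ae_of_all _ ?_)
      intro t
      push_cast
      ring
    rw [hpt]
    exact integral_ofReal
  rw [hreal, ← mul_assoc, one_div_mul_cancel h2pi, one_mul]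
end

section
/- For every natural number r and every complex number z, Σ_{k=0}^{r} ((−1)^k / ((r−k)!·k!)) · ( ∫_0^∞ (y−z)^k y^{r−k} e^{−y} dy ) · ( ∫_0^∞ (x−z)^k x^{r−k} e^{−x} dx ) = (z^r / r!) · ∫_0^∞ u (u−z)^r e^{−u} du, where all integrals are absolutely convergent complex-valued integrals over (0,∞). -/
open MeasureTheory Complex Finset

noncomputable def gg (n : ℕ) : ℝ → ℂ := fun y => (y : ℂ) ^ n * Complex.exp (-(y : ℂ))

lemma gg_eq (n : ℕ) (y : ℝ) (hy : y ∈ Set.Ioi (0:ℝ)) :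
    gg n y = ((Real.exp (-y) * y ^ ((n:ℝ) + 1 - 1) : ℝ) : ℂ) := by
  have hy' : (0:ℝ) < y := hy
  simp only [gg]
  rw [show ((n:ℝ) + 1 - 1) = (n:ℝ) by ring, Real.rpow_natCast]
  rw [Complex.ofReal_mul, Complex.ofReal_exp, Complex.ofReal_neg, Complex.ofReal_pow]
  ring

lemma gg_int (n : ℕ) : IntegrableOn (gg n) (Set.Ioi (0:ℝ)) := by
  have h := Real.GammaIntegral_convergent (s := (n:ℝ) + 1) (by positivity)
  have h2 : IntegrableOn (fun y : ℝ => ((Real.exp (-y) * y ^ ((n:ℝ) + 1 - 1) : ℝ) : ℂ))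
      (Set.Ioi (0:ℝ)) := h.ofReal
  exact h2.congr_fun (fun y hy => (gg_eq n y hy).symm) measurableSet_Ioi

lemma gg_val (n : ℕ) : ∫ y in Set.Ioi (0:ℝ), gg n y = (n.factorial : ℂ) := by
  rw [setIntegral_congr_fun measurableSet_Ioi (f := gg n)
    (g := fun y => ((Real.exp (-y) * y ^ ((n:ℝ) + 1 - 1) : ℝ) : ℂ)) (fun y hy => gg_eq n y hy)]
  rw [show (∫ (x : ℝ) in Set.Ioi 0, (↑(Real.exp (-x) * x ^ ((n:ℝ) + 1 - 1)) : ℂ)) = ((∫ (x : ℝ) in Set.Ioi 0, Real.exp (-x) * x ^ ((n:ℝ) + 1 - 1) : ℝ) : ℂ) from integral_ofReal, ← Real.Gamma_eq_integral (by positivity), Real.Gamma_nat_eq_factorial]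
  norm_num

lemma expand_poly (z : ℂ) (k m : ℕ) (y : ℝ) :
    ((y : ℂ) - z) ^ k * (y : ℂ) ^ m * Complex.exp (-(y : ℂ))
      = ∑ j ∈ range (k + 1), ((k.choose j : ℂ) * (-z) ^ (k - j)) * gg (m + j) y := by
  rw [sub_eq_add_neg, add_pow, Finset.sum_mul, Finset.sum_mul]
  refine Finset.sum_congr rfl fun j hj => ?_
  simp only [gg, pow_add]
  ring

lemma poly_int (z : ℂ) (k m : ℕ) :
    IntegrableOn (fun y : ℝ => ((y : ℂ) - z) ^ k * (y : ℂ) ^ m * Complex.exp (-(y : ℂ)))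
      (Set.Ioi (0:ℝ)) := by
  have : (fun y : ℝ => ((y : ℂ) - z) ^ k * (y : ℂ) ^ m * Complex.exp (-(y : ℂ)))
      = fun y => ∑ j ∈ range (k + 1), ((k.choose j : ℂ) * (-z) ^ (k - j)) * gg (m + j) y := by
    funext y; exact expand_poly z k m y
  rw [this]
  exact integrable_finset_sum _ (fun j _ => (gg_int (m + j)).const_mul _)

lemma poly_val (z : ℂ) (k m : ℕ) :
    ∫ y in Set.Ioi (0:ℝ), ((y : ℂ) - z) ^ k * (y : ℂ) ^ m * Complex.exp (-(y : ℂ))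
      = ∑ j ∈ range (k + 1), (k.choose j : ℂ) * (-z) ^ (k - j) * ((m + j).factorial : ℂ) := by
  simp_rw [expand_poly z k m]
  rw [integral_finset_sum _ (fun j _ => (gg_int (m + j)).const_mul _)]
  refine Finset.sum_congr rfl fun j _ => ?_
  rw [integral_const_mul, gg_val]

lemma choose_fact_sum (j : ℕ) :
    ∑ m ∈ range (j + 1), (j.choose m : ℂ) * (m.factorial : ℂ) * ((j - m).factorial : ℂ)
      = ((j + 1).factorial : ℂ) := by
  have h : ∀ m ∈ range (j + 1),
      (j.choose m : ℂ) * (m.factorial : ℂ) * ((j - m).factorial : ℂ) = (j.factorial : ℂ) := by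
    intro m hm
    have hm' : m ≤ j := Nat.lt_succ_iff.mp (Finset.mem_range.mp hm)
    exact_mod_cast congrArg (Nat.cast : ℕ → ℂ) (Nat.choose_mul_factorial_mul_factorial hm')
  rw [Finset.sum_congr rfl h, Finset.sum_const, card_range, Nat.factorial_succ]
  push_cast
  ring

lemma collapse (r : ℕ) (z x y : ℂ) :
    ∑ k ∈ range (r + 1), ((-1 : ℂ) ^ k / (((r - k).factorial : ℂ) * (k.factorial : ℂ))) *
        ((y - z) ^ k * y ^ (r - k)) * ((x - z) ^ k * x ^ (r - k))
      = z ^ r * (x + y - z) ^ r / (r.factorial : ℂ) := by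
  have h : z ^ r * (x + y - z) ^ r = (-((x - z) * (y - z)) + x * y) ^ r := by
    rw [← mul_pow]; ring_nf
  rw [h, add_pow, Finset.sum_div]
  refine Finset.sum_congr rfl fun k hk => ?_
  have hk' : k ≤ r := Nat.lt_succ_iff.mp (Finset.mem_range.mp hk)
  have hfac : ((r.choose k : ℂ)) * (k.factorial : ℂ) * ((r - k).factorial : ℂ)
      = (r.factorial : ℂ) := by
    exact_mod_cast congrArg (Nat.cast : ℕ → ℂ) (Nat.choose_mul_factorial_mul_factorial hk')
  have h1 : ((r - k).factorial : ℂ) ≠ 0 := Nat.cast_ne_zero.mpr (Nat.factorial_ne_zero _)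
  have h2 : ((k.factorial : ℂ)) ≠ 0 := Nat.cast_ne_zero.mpr (Nat.factorial_ne_zero _)
  have h3 : ((r.factorial : ℂ)) ≠ 0 := Nat.cast_ne_zero.mpr (Nat.factorial_ne_zero _)
  rw [show (-((x - z) * (y - z))) = (-1) * (x - z) * (y - z) by ring, mul_pow, mul_pow]
  field_simp
  linear_combination (-(y ^ (r - k) * x ^ (r - k) * (y - z) ^ k * (x - z) ^ k)) * hfac

lemma prod_expand (r : ℕ) (z : ℂ) (p : ℝ × ℝ) :
    ((p.1 : ℂ) + (p.2 : ℂ) - z) ^ r * Complex.exp (-(p.1 : ℂ)) * Complex.exp (-(p.2 : ℂ))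
      = ∑ j ∈ range (r + 1), ∑ m ∈ range (j + 1),
          ((r.choose j : ℂ) * (-z) ^ (r - j) * (j.choose m : ℂ)) * (gg m p.1 * gg (j - m) p.2) := by
  simp only [sub_eq_add_neg, add_pow, Finset.sum_mul]
  refine Finset.sum_congr rfl fun j hj => Finset.sum_congr rfl fun m hm => ?_
  simp only [gg]; ring

lemma double_val (r : ℕ) (z : ℂ) :
    (∫ p : ℝ × ℝ, ((p.1 : ℂ) + (p.2 : ℂ) - z) ^ r * Complex.exp (-(p.1 : ℂ)) *
        Complex.exp (-(p.2 : ℂ))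
      ∂((volume.restrict (Set.Ioi (0:ℝ))).prod (volume.restrict (Set.Ioi (0:ℝ)))))
    = ∑ j ∈ range (r + 1), (r.choose j : ℂ) * (-z) ^ (r - j) * ((j + 1).factorial : ℂ) := by
  simp_rw [prod_expand r z]
  rw [integral_finset_sum _ (fun j _ => integrable_finset_sum _
    (fun m _ => (((gg_int m).mul_prod (gg_int (j - m))).const_mul _)))]
  refine Finset.sum_congr rfl fun j _ => ?_
  rw [integral_finset_sum _ (fun m _ => (((gg_int m).mul_prod (gg_int (j - m))).const_mul _))]
  have : ∀ m ∈ range (j + 1),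
      (∫ p : ℝ × ℝ, ((r.choose j : ℂ) * (-z) ^ (r - j) * (j.choose m : ℂ)) *
          (gg m p.1 * gg (j - m) p.2)
        ∂((volume.restrict (Set.Ioi (0:ℝ))).prod (volume.restrict (Set.Ioi (0:ℝ)))))
      = (r.choose j : ℂ) * (-z) ^ (r - j) *
          ((j.choose m : ℂ) * (m.factorial : ℂ) * ((j - m).factorial : ℂ)) := by
    intro m _
    rw [integral_const_mul, integral_prod_mul, gg_val, gg_val]
    ring
  rw [Finset.sum_congr rfl this, ← Finset.mul_sum, choose_fact_sum]

lemma single_val (r : ℕ) (z : ℂ) :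
    (∫ u in Set.Ioi (0:ℝ), (u : ℂ) * ((u : ℂ) - z) ^ r * Complex.exp (-(u : ℂ)))
      = ∑ j ∈ range (r + 1), (r.choose j : ℂ) * (-z) ^ (r - j) * ((j + 1).factorial : ℂ) := by
  have h : ∀ u : ℝ, (u : ℂ) * ((u : ℂ) - z) ^ r * Complex.exp (-(u : ℂ))
      = ((u : ℂ) - z) ^ r * (u : ℂ) ^ 1 * Complex.exp (-(u : ℂ)) := by intro u; ring
  simp_rw [h]
  rw [poly_val z r 1]
  refine Finset.sum_congr rfl fun j _ => ?_
  rw [Nat.add_comm 1 j]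

/-- The Christoffel–Darboux-type evaluation for the Laguerre-related orthogonal
polynomials `p_k^{r+1}(z) = (1/(r−k)!) ∫_0^∞ (y−z)^k y^{r−k} e^{−y} dy`:
for every natural `r` and complex `z`,
`Σ_{k=0}^{r} ((−1)^k/((r−k)!k!)) (∫_0^∞ (y−z)^k y^{r−k} e^{−y} dy)
   (∫_0^∞ (x−z)^k x^{r−k} e^{−x} dx) = (z^r/r!) ∫_0^∞ u (u−z)^r e^{−u} du`. -/
theorem christoffel_darboux_sum (r : ℕ) (z : ℂ) :
    ∑ k ∈ Finset.range (r + 1),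
      ((-1 : ℂ) ^ k / (((r - k).factorial : ℂ) * (k.factorial : ℂ))) *
        (∫ y in Set.Ioi (0 : ℝ), ((y : ℂ) - z) ^ k * (y : ℂ) ^ (r - k) * Complex.exp (-(y : ℂ))) *
        (∫ x in Set.Ioi (0 : ℝ), ((x : ℂ) - z) ^ k * (x : ℂ) ^ (r - k) * Complex.exp (-(x : ℂ)))
    = (z ^ r / (r.factorial : ℂ)) *
        ∫ u in Set.Ioi (0 : ℝ), (u : ℂ) * ((u : ℂ) - z) ^ r * Complex.exp (-(u : ℂ)) := by
  set μ := volume.restrict (Set.Ioi (0:ℝ)) with hμ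
  have step1 : ∀ k ∈ range (r + 1),
      ((-1 : ℂ) ^ k / (((r - k).factorial : ℂ) * (k.factorial : ℂ))) *
        (∫ y in Set.Ioi (0 : ℝ), ((y : ℂ) - z) ^ k * (y : ℂ) ^ (r - k) * Complex.exp (-(y : ℂ))) *
        (∫ x in Set.Ioi (0 : ℝ), ((x : ℂ) - z) ^ k * (x : ℂ) ^ (r - k) * Complex.exp (-(x : ℂ)))
      = ∫ p : ℝ × ℝ, ((-1 : ℂ) ^ k / (((r - k).factorial : ℂ) * (k.factorial : ℂ))) *
          ((((p.1 : ℂ) - z) ^ k * (p.1 : ℂ) ^ (r - k) * Complex.exp (-(p.1 : ℂ))) *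
           (((p.2 : ℂ) - z) ^ k * (p.2 : ℂ) ^ (r - k) * Complex.exp (-(p.2 : ℂ))))
          ∂(μ.prod μ) := by
    intro k _
    rw [integral_const_mul, integral_prod_mul
      (f := fun y : ℝ => ((y : ℂ) - z) ^ k * (y : ℂ) ^ (r - k) * Complex.exp (-(y : ℂ)))
      (g := fun x : ℝ => ((x : ℂ) - z) ^ k * (x : ℂ) ^ (r - k) * Complex.exp (-(x : ℂ)))]
    ring
  rw [Finset.sum_congr rfl step1,
    ← integral_finset_sum _ (fun k _ => (((poly_int z k (r - k)).mul_prod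
      (poly_int z k (r - k))).const_mul _))]
  have hpt : ∀ p : ℝ × ℝ,
      (∑ k ∈ range (r + 1),
        ((-1 : ℂ) ^ k / (((r - k).factorial : ℂ) * (k.factorial : ℂ))) *
          ((((p.1 : ℂ) - z) ^ k * (p.1 : ℂ) ^ (r - k) * Complex.exp (-(p.1 : ℂ))) *
           (((p.2 : ℂ) - z) ^ k * (p.2 : ℂ) ^ (r - k) * Complex.exp (-(p.2 : ℂ)))))
      = (z ^ r / (r.factorial : ℂ)) *
          (((p.1 : ℂ) + (p.2 : ℂ) - z) ^ r * Complex.exp (-(p.1 : ℂ)) *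
            Complex.exp (-(p.2 : ℂ))) := by
    intro p
    rw [show (z ^ r / (r.factorial : ℂ)) *
          (((p.1 : ℂ) + (p.2 : ℂ) - z) ^ r * Complex.exp (-(p.1 : ℂ)) *
            Complex.exp (-(p.2 : ℂ)))
        = (z ^ r * ((p.1 : ℂ) + (p.2 : ℂ) - z) ^ r / (r.factorial : ℂ)) *
            (Complex.exp (-(p.1 : ℂ)) * Complex.exp (-(p.2 : ℂ))) by ring,
      ← collapse r z p.1 p.2, Finset.sum_mul]
    exact Finset.sum_congr rfl fun k _ => by ring
  simp_rw [hpt]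
  rw [integral_const_mul, double_val, ← single_val]
end

section
/- Let n ≥ 1 be an integer, t a real number with 0 < t < 1, u a nonzero real number, and λ = (λ_1 ≥ λ_2 ≥ ⋯ ≥ λ_n ≥ 0) a partition with at most n parts. Set x_i = u·t^{i−1} for 1 ≤ i ≤ n (these points are pairwise distinct). Then Σ_{σ ∈ S_n} ∏_{i=1}^{n} x_{σ(i)}^{λ_i} · ∏_{1 ≤ i < j ≤ n} ( x_{σ(i)} − t·x_{σ(j)} ) / ( x_{σ(i)} − x_{σ(j)} ) = u^{|λ|} · t^{n(λ)} · (t;t)_n / (1−t)^n, where |λ| = Σ_i λ_i, n(λ) = Σ_{i=1}^{n} (i−1)λ_i, and (t;t)_n = ∏_{i=1}^{n} (1 − t^i). (This is the principal specialization formula P_λ(u, ut, …, ut^{n−1}; t) = u^{|λ|} t^{n(λ)} (t;t)_n / ( (t;t)_{n−ℓ(λ)} ∏_{i≥1} (t;t)_{m_i(λ)} ) combined with the explicit symmetrization formula defining the Hall–Littlewood polynomial P_λ.) -/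
open Finset

lemma prod_pairs_fin {n : ℕ} (F : Fin n → Fin n → ℝ) :
    ∏ p ∈ Finset.univ.filter (fun p : Fin n × Fin n => p.1 < p.2), F p.1 p.2
      = ∏ i : Fin n, ∏ j ∈ Finset.Ioi i, F i j := by
  rw [Finset.prod_sigma']
  refine Finset.prod_nbij' (fun p => ⟨p.1, p.2⟩) (fun x => (x.1, x.2)) ?_ ?_ ?_ ?_ ?_ <;>
    simp [Finset.mem_sigma]

lemma hl_aux (t : ℝ) (ht0 : 0 < t) (ht1 : t < 1) :
    ∀ n : ℕ, ∀ u : ℝ, u ≠ 0 → ∀ lam : Fin n → ℕ,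
    ∑ σ : Equiv.Perm (Fin n),
      (∏ i : Fin n, (u * t ^ (σ i : ℕ)) ^ lam i) *
        ∏ p ∈ Finset.univ.filter (fun p : Fin n × Fin n => p.1 < p.2),
          (u * t ^ (σ p.1 : ℕ) - t * (u * t ^ (σ p.2 : ℕ))) /
            (u * t ^ (σ p.1 : ℕ) - u * t ^ (σ p.2 : ℕ))
    = u ^ (∑ i : Fin n, lam i) * t ^ (∑ i : Fin n, (i : ℕ) * lam i) *
        (∏ i ∈ Finset.range n, (1 - t ^ (i + 1))) / (1 - t) ^ n := by
  intro n
  induction n with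
  | zero =>
      intro u hu lam
      simp
  | succ m ih =>
      intro u hu lam
      rw [← Equiv.Perm.decomposeFin.symm.sum_comp]
      rw [Fintype.sum_prod_type]
      rw [Fin.sum_univ_succ]
      have hvanish : ∀ q : Fin m, ∀ e : Equiv.Perm (Fin m),
          ((∏ i : Fin (m+1),
              (u * t ^ ((Equiv.Perm.decomposeFin.symm (q.succ, e)) i : ℕ)) ^ lam i) *
            ∏ p ∈ Finset.univ.filter (fun p : Fin (m+1) × Fin (m+1) => p.1 < p.2),
              (u * t ^ ((Equiv.Perm.decomposeFin.symm (q.succ, e)) p.1 : ℕ) -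
                 t * (u * t ^ ((Equiv.Perm.decomposeFin.symm (q.succ, e)) p.2 : ℕ))) /
                (u * t ^ ((Equiv.Perm.decomposeFin.symm (q.succ, e)) p.1 : ℕ) -
                 u * t ^ ((Equiv.Perm.decomposeFin.symm (q.succ, e)) p.2 : ℕ))) = 0 := by
        intro q e
        set σ := Equiv.Perm.decomposeFin.symm (q.succ, e) with hσ
        have h0 : σ 0 = q.succ := Equiv.Perm.decomposeFin_symm_apply_zero _ _
        set j := σ.symm q.castSucc with hjdef
        have hj : σ j = q.castSucc := σ.apply_symm_apply _
        have hj0 : (0 : Fin (m+1)) < j := by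
          refine Fin.pos_of_ne_zero ?_
          intro h
          rw [h] at hj
          rw [h0] at hj
          exact absurd hj (show q.castSucc < q.succ from Fin.castSucc_lt_succ).ne'
        apply mul_eq_zero_of_right
        apply Finset.prod_eq_zero (i := ((0 : Fin (m+1)), j))
        · simp [hj0]
        · rw [h0, hj]
          have : (u * t ^ ((q.succ : Fin (m+1)) : ℕ) -
              t * (u * t ^ ((q.castSucc : Fin (m+1)) : ℕ))) = 0 := by
            rw [Fin.val_succ, Fin.coe_castSucc, pow_succ]
            ring
          rw [this, zero_div]
      rw [Finset.sum_eq_zero (fun q _ => Finset.sum_eq_zero (fun e _ => hvanish q e)),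
        add_zero]
      have hterm : ∀ e : Equiv.Perm (Fin m),
          ((∏ i : Fin (m+1),
              (u * t ^ ((Equiv.Perm.decomposeFin.symm ((0 : Fin (m+1)), e)) i : ℕ)) ^ lam i) *
            ∏ p ∈ Finset.univ.filter (fun p : Fin (m+1) × Fin (m+1) => p.1 < p.2),
              (u * t ^ ((Equiv.Perm.decomposeFin.symm ((0 : Fin (m+1)), e)) p.1 : ℕ) -
                 t * (u * t ^ ((Equiv.Perm.decomposeFin.symm ((0 : Fin (m+1)), e)) p.2 : ℕ))) /
                (u * t ^ ((Equiv.Perm.decomposeFin.symm ((0 : Fin (m+1)), e)) p.1 : ℕ) -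
                 u * t ^ ((Equiv.Perm.decomposeFin.symm ((0 : Fin (m+1)), e)) p.2 : ℕ)))
          = (u ^ lam 0 *
              ∏ j ∈ Finset.range m, ((u - t * ((u*t) * t ^ j)) / (u - (u*t) * t ^ j))) *
            ((∏ i : Fin m, ((u*t) * t ^ (e i : ℕ)) ^ (lam i.succ)) *
              ∏ p ∈ Finset.univ.filter (fun p : Fin m × Fin m => p.1 < p.2),
                ((u*t) * t ^ (e p.1 : ℕ) - t * ((u*t) * t ^ (e p.2 : ℕ))) /
                  ((u*t) * t ^ (e p.1 : ℕ) - (u*t) * t ^ (e p.2 : ℕ))) := by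
        intro e
        set σ := Equiv.Perm.decomposeFin.symm ((0 : Fin (m+1)), e) with hσ
        have h0 : σ 0 = 0 := Equiv.Perm.decomposeFin_symm_apply_zero _ _
        have hs : ∀ i : Fin m, σ i.succ = (e i).succ := by
          intro i
          rw [hσ, Equiv.Perm.decomposeFin_symm_apply_succ]
          simp
        have hX : ∀ k : ℕ, u * t ^ (k+1) = (u*t) * t ^ k := fun k => by ring
        rw [prod_pairs_fin (fun a b => (u * t ^ (σ a : ℕ) - t * (u * t ^ (σ b : ℕ))) /
            (u * t ^ (σ a : ℕ) - u * t ^ (σ b : ℕ)))]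
        simp only [Fin.prod_univ_succ, Fin.prod_Ioi_zero, Fin.prod_Ioi_succ, h0, hs,
          Fin.val_zero, Fin.val_succ, pow_zero, mul_one, hX]
        rw [← prod_pairs_fin (fun a b =>
            ((u*t) * t ^ (e a : ℕ) - t * ((u*t) * t ^ (e b : ℕ))) /
              ((u*t) * t ^ (e a : ℕ) - (u*t) * t ^ (e b : ℕ)))]
        have hC : ∏ x : Fin m, (u - t * ((u*t) * t ^ (e x : ℕ))) / (u - (u*t) * t ^ (e x : ℕ))
            = ∏ j ∈ Finset.range m, ((u - t * ((u*t) * t ^ j)) / (u - (u*t) * t ^ j)) := by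
          refine (Fintype.prod_equiv e
            (fun x : Fin m => (u - t * ((u*t) * t ^ (e x : ℕ))) / (u - (u*t) * t ^ (e x : ℕ)))
            (fun k : Fin m => (u - t * ((u*t) * t ^ (k : ℕ))) / (u - (u*t) * t ^ (k : ℕ)))
            (fun x => rfl)).trans ?_
          exact Fin.prod_univ_eq_prod_range
            (fun j : ℕ => (u - t * ((u*t) * t ^ j)) / (u - (u*t) * t ^ j)) m
        rw [hC]
        ring
      rw [Finset.sum_congr rfl (fun e _ => hterm e), ← Finset.mul_sum,
        ih (u*t) (by positivity) (fun i => lam i.succ)]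
      -- final algebra
      have hne : ∀ k : ℕ, (1 : ℝ) - t ^ (k+1) ≠ 0 := by
        intro k
        have : t ^ (k+1) < 1 := pow_lt_one₀ ht0.le ht1 k.succ_ne_zero
        linarith
      have h1t : (1 : ℝ) - t ≠ 0 := by linarith
      have hCval : ∏ j ∈ Finset.range m, ((u - t * ((u*t) * t ^ j)) / (u - (u*t) * t ^ j))
          = ∏ j ∈ Finset.range m, ((1 - t ^ (j+2)) / (1 - t ^ (j+1))) := by
        refine Finset.prod_congr rfl (fun j _ => ?_)
        have hnum : u - t * ((u*t) * t ^ j) = u * (1 - t ^ (j+2)) := by ring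
        have hden : u - (u*t) * t ^ j = u * (1 - t ^ (j+1)) := by ring
        rw [hnum, hden, mul_div_mul_left _ _ hu]
      rw [hCval]
      rw [Fin.sum_univ_succ lam, Fin.sum_univ_succ (fun i : Fin (m+1) => (i : ℕ) * lam i)]
      simp only [Fin.val_zero, Fin.val_succ, zero_mul, zero_add]
      have hsum2 : ∑ i : Fin m, ((i : ℕ) + 1) * lam i.succ
          = (∑ i : Fin m, lam i.succ) + ∑ i : Fin m, (i : ℕ) * lam i.succ := by
        rw [← Finset.sum_add_distrib]
        exact Finset.sum_congr rfl (fun i _ => by ring)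
      rw [hsum2]
      have hsplit : ∏ j ∈ Finset.range m, ((1 - t ^ (j+2)) / (1 - t ^ (j+1)))
          = (∏ j ∈ Finset.range m, (1 - t ^ (j+2))) /
            ∏ j ∈ Finset.range m, (1 - t ^ (j+1)) := Finset.prod_div_distrib _ _
      have hprodsucc : ∏ i ∈ Finset.range (m+1), (1 - t ^ (i+1))
          = (∏ i ∈ Finset.range m, (1 - t ^ (i+2))) * (1 - t) := by
        rw [Finset.prod_range_succ']
        norm_num
      have hD : (∏ j ∈ Finset.range m, (1 - t ^ (j+1))) ≠ 0 :=
        Finset.prod_ne_zero_iff.mpr (fun j _ => hne j)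
      rw [hsplit, hprodsucc]
      rw [pow_add, pow_add, pow_add, mul_pow, pow_succ (1 - t)]
      field_simp

/-- Principal specialization of the Hall–Littlewood polynomial via its symmetrization
formula: for `n ≥ 1`, `0 < t < 1`, `u ≠ 0`, a partition `λ` of length `≤ n`
(a weakly decreasing function `Fin n → ℕ`), and `x_i = u t^{i−1}` (0-indexed: `u t^i`),
`Σ_{σ ∈ S_n} ∏_i x_{σ(i)}^{λ_i} ∏_{i<j} (x_{σ(i)} − t x_{σ(j)})/(x_{σ(i)} − x_{σ(j)})
  = u^{|λ|} t^{n(λ)} (t;t)_n / (1−t)^n`,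
where `|λ| = Σ λ_i`, `n(λ) = Σ (i−1)λ_i` and `(t;t)_n = ∏_{i=1}^n (1−t^i)`. -/
theorem hall_littlewood_principal_specialization
    (n : ℕ) (hn : 1 ≤ n) (t u : ℝ) (ht0 : 0 < t) (ht1 : t < 1) (hu : u ≠ 0)
    (lam : Fin n → ℕ) (hlam : Antitone lam) :
    ∑ σ : Equiv.Perm (Fin n),
      (∏ i : Fin n, (u * t ^ (σ i : ℕ)) ^ lam i) *
        ∏ p ∈ Finset.univ.filter (fun p : Fin n × Fin n => p.1 < p.2),
          (u * t ^ (σ p.1 : ℕ) - t * (u * t ^ (σ p.2 : ℕ))) /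
            (u * t ^ (σ p.1 : ℕ) - u * t ^ (σ p.2 : ℕ))
    = u ^ (∑ i : Fin n, lam i) * t ^ (∑ i : Fin n, (i : ℕ) * lam i) *
        (∏ i ∈ Finset.range n, (1 - t ^ (i + 1))) / (1 - t) ^ n := by
  exact hl_aux t ht0 ht1 n u hu lam
end

section
/- The covariance function C(d) = ∫_0^∞ y² e^{−y² − d·y} dy of the limiting bulk fluctuation process satisfies lim_{d→∞} d³ · C(d) = 2; in particular the correlations Cov(R_s, R_{s+d}) = C(|d|) decay like 2·|d|^{−3} as |d| → ∞ and remain bounded as d → 0. -/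
open MeasureTheory Filter

section Aux

open Real Set

lemma poly_exp_integral (n : ℕ) {d : ℝ} (hd : 0 < d) :
    ∫ y in Ioi (0:ℝ), y ^ n * Real.exp (-(d * y)) = (Nat.factorial n) / d ^ (n + 1) := by
  have h := integral_rpow_mul_exp_neg_mul_Ioi (a := (n:ℝ) + 1) (r := d) (by positivity) hd
  rw [show ((n:ℝ) + 1 - 1) = (n:ℝ) by ring, Real.Gamma_nat_eq_factorial] at h
  rw [setIntegral_congr_fun measurableSet_Ioi (g := fun y => y ^ ((n:ℝ)) * Real.exp (-(d*y)))
      (fun y hy => by simp [Real.rpow_natCast]), h,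
    show ((n:ℝ) + 1) = ((n+1 : ℕ) : ℝ) by push_cast; ring, Real.rpow_natCast]
  rw [one_div, inv_pow, div_eq_mul_inv, mul_comm]

lemma poly_exp_integrable (n : ℕ) {d : ℝ} (hd : 0 < d) :
    IntegrableOn (fun y : ℝ => y ^ n * Real.exp (-(d * y))) (Ioi 0) := by
  have h := integrableOn_rpow_mul_exp_neg_mul_rpow (p := 1) (s := (n:ℝ)) (b := d)
    (neg_one_lt_zero.trans_le (Nat.cast_nonneg n)) zero_lt_one hd
  refine h.congr_fun (fun y hy => ?_) measurableSet_Ioi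
  dsimp only
  rw [Real.rpow_one, Real.rpow_natCast, neg_mul]

lemma main_integrable {d : ℝ} (hd : 0 < d) :
    IntegrableOn (fun y : ℝ => y ^ 2 * Real.exp (-y ^ 2 - d * y)) (Ioi 0) := by
  refine (poly_exp_integrable 2 hd).mono' ?_ ?_
  · exact (measurable_id.pow_const 2).aestronglyMeasurable.mul
      ((measurable_id.pow_const 2).neg.sub
        (measurable_const.mul measurable_id)).exp.aestronglyMeasurable
  · filter_upwards [ae_restrict_mem measurableSet_Ioi] with y hy
    rw [Real.norm_eq_abs, abs_mul, abs_of_nonneg (by positivity),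
      abs_of_nonneg (Real.exp_pos _).le]
    exact mul_le_mul_of_nonneg_left
      (Real.exp_le_exp.mpr (by nlinarith [sq_nonneg y])) (by positivity)

lemma upper_bound {d : ℝ} (hd : 0 < d) :
    (∫ y in Ioi (0:ℝ), y ^ 2 * Real.exp (-y ^ 2 - d * y)) ≤ 2 / d ^ 3 := by
  have h2 := poly_exp_integral 2 hd
  norm_num at h2
  rw [← h2]
  refine setIntegral_mono_on (main_integrable hd) (poly_exp_integrable 2 hd)
    measurableSet_Ioi (fun y hy => ?_)
  exact mul_le_mul_of_nonneg_left
    (Real.exp_le_exp.mpr (by nlinarith [sq_nonneg y])) (by positivity)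

lemma lower_bound {d : ℝ} (hd : 0 < d) :
    2 / d ^ 3 - 24 / d ^ 5 ≤ ∫ y in Ioi (0:ℝ), y ^ 2 * Real.exp (-y ^ 2 - d * y) := by
  have h2 := poly_exp_integral 2 hd
  have h4 := poly_exp_integral 4 hd
  norm_num at h2 h4
  have hsub : (∫ y in Ioi (0:ℝ),
      (y ^ 2 * Real.exp (-(d * y)) - y ^ 4 * Real.exp (-(d * y))))
      = 2 / d ^ 3 - 24 / d ^ 5 := by
    rw [integral_sub (poly_exp_integrable 2 hd) (poly_exp_integrable 4 hd), h2, h4]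
  rw [← hsub]
  refine setIntegral_mono_on
    ((poly_exp_integrable 2 hd).sub (poly_exp_integrable 4 hd))
    (main_integrable hd) measurableSet_Ioi (fun y hy => ?_)
  have h1 : 1 - y ^ 2 ≤ Real.exp (-y ^ 2) := by
    have := Real.add_one_le_exp (-y ^ 2); linarith
  have hprod : Real.exp (-y ^ 2) * Real.exp (-(d * y)) = Real.exp (-y ^ 2 - d * y) := by
    rw [← Real.exp_add]; ring_nf
  calc y ^ 2 * Real.exp (-(d * y)) - y ^ 4 * Real.exp (-(d * y))
      = (1 - y ^ 2) * (y ^ 2 * Real.exp (-(d * y))) := by ring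
    _ ≤ Real.exp (-y ^ 2) * (y ^ 2 * Real.exp (-(d * y))) :=
        mul_le_mul_of_nonneg_right h1 (by positivity)
    _ = y ^ 2 * (Real.exp (-y ^ 2) * Real.exp (-(d * y))) := by ring
    _ = y ^ 2 * Real.exp (-y ^ 2 - d * y) := by rw [hprod]

end Aux

/-- Cubic decay of the bulk covariance function: the covariance
`C(d) = ∫_0^∞ y² e^{−y² − dy} dy` of the limiting bulk fluctuation process satisfies
`lim_{d→∞} d³ C(d) = 2`. -/
theorem bulk_covariance_cubic_decay :
    Tendsto
      (fun d : ℝ => d ^ 3 * ∫ y in Set.Ioi (0 : ℝ), y ^ 2 * Real.exp (-y ^ 2 - d * y))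
      atTop (nhds 2) := by
  have hzero : Tendsto (fun d : ℝ => 24 / d ^ 2) atTop (nhds 0) :=
    tendsto_const_nhds.div_atTop (tendsto_pow_atTop two_ne_zero)
  have hlo : Tendsto (fun d : ℝ => 2 - 24 / d ^ 2) atTop (nhds 2) := by
    simpa using tendsto_const_nhds.sub hzero
  refine tendsto_of_tendsto_of_tendsto_of_le_of_le' hlo tendsto_const_nhds ?_ ?_
  · filter_upwards [eventually_gt_atTop (0:ℝ)] with d hd
    have h := mul_le_mul_of_nonneg_left (lower_bound hd) (le_of_lt (by positivity : (0:ℝ) < d ^ 3))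
    calc 2 - 24 / d ^ 2 = d ^ 3 * (2 / d ^ 3 - 24 / d ^ 5) := by field_simp
      _ ≤ _ := h
  · filter_upwards [eventually_gt_atTop (0:ℝ)] with d hd
    have h := mul_le_mul_of_nonneg_left (upper_bound hd) (le_of_lt (by positivity : (0:ℝ) < d ^ 3))
    calc d ^ 3 * ∫ y in Set.Ioi (0 : ℝ), y ^ 2 * Real.exp (-y ^ 2 - d * y)
        ≤ d ^ 3 * (2 / d ^ 3) := h
      _ = 2 := by field_simp
end
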